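/- arXiv:1204.4525 — 3 statements merged into one kernel-verified Lean document; each statement's English description precedes it below -/
import Mathlib

section
/- Suppose I : Y → [0,∞] has compact level sets and the Laplace principle holds: for all bounded continuous Φ : Y → ℝ, ε log E^G(exp(Φ(Z^ε)/ε)) → sup_{y∈Y}(Φ(y) − I(y)) as ε → 0, where E^G is a sublinear expectation with associated capacity c^G(A) = sup_{P} P(A). Then for every open set O ⊆ Y, liminf_{ε→0} ε log c^G(Z^ε ∈ O) ≥ − inf_{y∈O} I(y). -/
open MeasureTheory Filter Topology
open scoped ENNReal

private lemma liminf_max_const (c : EReal) (f : ℝ → EReal) (F : Filter ℝ) :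
    liminf (fun x => max (f x) c) F ≤ max (liminf f F) c := by
  rw [liminf_eq]
  refine sSup_le fun a ha => ?_
  rcases le_or_gt a c with h | h
  · exact le_max_of_le_right h
  · refine le_max_of_le_left (le_sSup ?_)
    filter_upwards [ha] with x hx
    rcases le_max_iff.1 hx with h1 | h1
    · exact h1
    · exact absurd h1 (not_le.2 h)

private lemma ereal_coe_max (p q : ℝ) :
    ((max p q : ℝ) : EReal) = max (p : EReal) (q : EReal) := by
  rcases le_total p q with h | h <;>
    simp [max_eq_right, max_eq_left, h, EReal.coe_le_coe_iff]

private lemma key_real {ε x a b : ℝ} (hε : 0 < ε) (hx : 0 < x) (hab : x ≤ a + b)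
    (ha : 0 ≤ a) (hb : 0 < b) :
    ε * Real.log x ≤ ε * Real.log 2 + max (ε * Real.log a) (ε * Real.log b) := by
  rcases le_total a b with h | h
  · have h2 : x ≤ 2 * b := by linarith
    have hlog : Real.log x ≤ Real.log 2 + Real.log b := by
      calc Real.log x ≤ Real.log (2 * b) := Real.log_le_log hx h2
        _ = Real.log 2 + Real.log b := Real.log_mul two_ne_zero (ne_of_gt hb)
    have := mul_le_mul_of_nonneg_left hlog hε.le
    have hmax := le_max_right (ε * Real.log a) (ε * Real.log b)
    nlinarith
  · have ha' : 0 < a := lt_of_lt_of_le hb h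
    have h2 : x ≤ 2 * a := by linarith
    have hlog : Real.log x ≤ Real.log 2 + Real.log a := by
      calc Real.log x ≤ Real.log (2 * a) := Real.log_le_log hx h2
        _ = Real.log 2 + Real.log a := Real.log_mul two_ne_zero (ne_of_gt ha')
    have := mul_le_mul_of_nonneg_left hlog hε.le
    have hmax := le_max_left (ε * Real.log a) (ε * Real.log b)
    nlinarith

theorem stmt_8 {Ω Y : Type*} [MeasurableSpace Ω]
    [MetricSpace Y] [CompleteSpace Y] [TopologicalSpace.SeparableSpace Y]
    [MeasurableSpace Y] [BorelSpace Y]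
    (Ps : Set (Measure Ω)) (hne : Ps.Nonempty)
    (hprob : ∀ P ∈ Ps, IsProbabilityMeasure P)
    (EG : (Ω → ℝ) → ℝ)
    (hEG : ∀ X, EG X = sSup ((fun P : Measure Ω => ∫ ω, X ω ∂P) '' Ps))
    (cap : Set Ω → ℝ)
    (hcap : ∀ A, cap A = sSup ((fun P : Measure Ω => (P A).toReal) '' Ps))
    (Z : ℝ → Ω → Y) (hZ : ∀ ε, Measurable (Z ε))
    (I : Y → ℝ≥0∞)
    (hcompact : ∀ L : ℝ≥0∞, L ≠ ⊤ → IsCompact {y : Y | I y ≤ L})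
    (hLaplace : ∀ Φ : Y → ℝ, Continuous Φ → (∃ M, ∀ y, |Φ y| ≤ M) →
      Tendsto
        (fun ε : ℝ =>
          ((ε * Real.log (EG (fun ω => Real.exp (Φ (Z ε ω) / ε)))) : EReal))
        (𝓝[>] (0 : ℝ))
        (𝓝 (⨆ y : Y, ((Φ y : EReal) - ((I y : ℝ≥0∞) : EReal))))) :
    ∀ O : Set Y, IsOpen O →
      -(⨅ y ∈ O, ((I y : ℝ≥0∞) : EReal)) ≤
        liminf (fun ε : ℝ => ((ε * Real.log (cap ((Z ε) ⁻¹' O))) : EReal))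
          (𝓝[>] (0 : ℝ)) := by
  intro O hO
  set L : EReal :=
    liminf (fun ε : ℝ => ((ε * Real.log (cap ((Z ε) ⁻¹' O))) : EReal))
      (𝓝[>] (0 : ℝ)) with hL
  have main : ∀ y₀ ∈ O, I y₀ ≠ ⊤ → -((I y₀ : ℝ≥0∞) : EReal) ≤ L := by
    intro y₀ hy₀ htop
    obtain ⟨δ, hδ, hball⟩ := Metric.isOpen_iff.1 hO y₀ hy₀
    set M : ℝ := (I y₀).toReal + 1 with hMdef
    have hMpos : 0 < M := by
      have := ENNReal.toReal_nonneg (a := I y₀); linarith [this]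
    set Φ : Y → ℝ := fun y => -(M * min (dist y y₀ / δ) 1) with hΦdef
    have hcont : Continuous Φ := by
      apply Continuous.neg
      exact (continuous_const.mul (((continuous_id.dist
        continuous_const).div_const δ).min continuous_const))
    have hΦle : ∀ y, Φ y ≤ 0 := by
      intro y
      have h1 : 0 ≤ min (dist y y₀ / δ) 1 := le_min (by positivity) zero_le_one
      simp only [hΦdef, neg_nonpos]
      positivity
    have hΦge : ∀ y, -M ≤ Φ y := by
      intro y
      have h1 : min (dist y y₀ / δ) 1 ≤ 1 := min_le_right _ _
      have h0 : 0 ≤ min (dist y y₀ / δ) 1 := le_min (by positivity) zero_le_one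
      simp only [hΦdef, neg_le_neg_iff]
      nlinarith
    have hbd : ∀ y, |Φ y| ≤ M := fun y => abs_le.2 ⟨hΦge y, (hΦle y).trans hMpos.le⟩
    have hΦ0 : Φ y₀ = 0 := by
      simp [hΦdef, Metric.mem_ball, dist_self, zero_div, min_eq_left (zero_le_one' ℝ)]
    have hΦout : ∀ y, y ∉ O → Φ y = -M := by
      intro y hy
      have hdist : δ ≤ dist y y₀ := by
        by_contra h
        exact hy (hball (by simpa [Metric.mem_ball] using not_le.1 h))
      have h1 : (1:ℝ) ≤ dist y y₀ / δ := (one_le_div hδ).2 hdist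
      simp [hΦdef, min_eq_right h1]
    have hLap := hLaplace Φ hcont ⟨M, hbd⟩
    set S : EReal := ⨆ y : Y, ((Φ y : EReal) - ((I y : ℝ≥0∞) : EReal)) with hSdef
    have hS0 : S ≤ 0 := by
      refine iSup_le fun y => ?_
      have ha : ((Φ y : ℝ) : EReal) ≤ 0 := by
        exact_mod_cast EReal.coe_le_coe_iff.2 (hΦle y)
      have hb : -(((I y : ℝ≥0∞)) : EReal) ≤ 0 := by
        rw [EReal.neg_le, neg_zero]; exact EReal.coe_ennreal_nonneg _
      have := add_le_add ha hb
      simpa [sub_eq_add_neg] using this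
    have hSb : -((I y₀ : ℝ≥0∞) : EReal) ≤ S := by
      have := le_iSup (fun y => ((Φ y : EReal) - ((I y : ℝ≥0∞) : EReal))) y₀
      simpa [hΦ0, zero_sub] using this
    have hSbot : S ≠ ⊥ := by
      intro h
      rw [h, le_bot_iff] at hSb
      have : ((I y₀ : ℝ≥0∞) : EReal) = ⊤ := by
        rwa [EReal.neg_eq_bot_iff] at hSb
      exact htop (EReal.coe_ennreal_eq_top_iff.1 this)
    have hStop : S ≠ ⊤ := by
      intro h; rw [h] at hS0; simp at hS0
    have hScoe : S = ((S.toReal : ℝ) : EReal) := (EReal.coe_toReal hStop hSbot).symm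
    have hEGfun : Tendsto
        (fun ε : ℝ => ε * Real.log (EG (fun ω => Real.exp (Φ (Z ε ω) / ε))))
        (𝓝[>] (0:ℝ)) (𝓝 S.toReal) := by
      rw [hScoe] at hLap
      exact EReal.tendsto_coe.1 hLap
    have hlog2 : Tendsto (fun ε : ℝ => ε * Real.log 2) (𝓝[>] (0:ℝ)) (𝓝 0) := by
      have : Tendsto (fun ε : ℝ => ε * Real.log 2) (𝓝 (0:ℝ)) (𝓝 (0 * Real.log 2)) :=
        (continuous_id.mul continuous_const).tendsto 0
      simpa using this.mono_left nhdsWithin_le_nhds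
    have hdiff : Tendsto
        (fun ε : ℝ => ((ε * Real.log (EG (fun ω => Real.exp (Φ (Z ε ω) / ε)))
          - ε * Real.log 2 : ℝ) : EReal)) (𝓝[>] (0:ℝ)) (𝓝 S) := by
      rw [hScoe]
      exact EReal.tendsto_coe.2 (by simpa using hEGfun.sub hlog2)
    -- the key eventual inequality
    have hev : ∀ᶠ ε in 𝓝[>] (0:ℝ),
        ((ε * Real.log (EG (fun ω => Real.exp (Φ (Z ε ω) / ε)))
          - ε * Real.log 2 : ℝ) : EReal) ≤
        max ((ε * Real.log (cap ((Z ε) ⁻¹' O)) : ℝ) : EReal) ((-M : ℝ) : EReal) := by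
      filter_upwards [self_mem_nhdsWithin] with ε hε
      have hεpos : (0:ℝ) < ε := hε
      set A : Set Ω := (Z ε) ⁻¹' O with hAdef
      have hA : MeasurableSet A := (hZ ε) hO.measurableSet
      set a : ℝ := cap A with hadef
      set b : ℝ := Real.exp (-M / ε) with hbdef
      have hb0 : 0 < b := Real.exp_pos _
      have hBddcap : BddAbove ((fun P : Measure Ω => (P A).toReal) '' Ps) := by
        refine ⟨1, ?_⟩
        rintro _ ⟨P, hP, rfl⟩
        haveI := hprob P hP
        calc (P A).toReal ≤ (1 : ℝ≥0∞).toReal :=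
              ENNReal.toReal_mono (by simp) prob_le_one
          _ = 1 := by simp
      have ha0 : 0 ≤ a := by
        obtain ⟨P, hP⟩ := hne
        rw [hadef, hcap]
        exact le_trans ENNReal.toReal_nonneg (le_csSup hBddcap ⟨P, hP, rfl⟩)
      -- measurability of the integrand
      have hfm : Measurable fun ω => Real.exp (Φ (Z ε ω) / ε) :=
        Real.measurable_exp.comp ((hcont.measurable.comp (hZ ε)).div_const ε)
      have hfle1 : ∀ ω, Real.exp (Φ (Z ε ω) / ε) ≤ 1 := by
        intro ω
        rw [Real.exp_le_one_iff]
        exact div_nonpos_of_nonpos_of_nonneg (hΦle _) hεpos.le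
      have hfgeb : ∀ ω, b ≤ Real.exp (Φ (Z ε ω) / ε) := by
        intro ω
        apply Real.exp_le_exp.2
        exact (div_le_div_iff_of_pos_right hεpos).2 (hΦge _)
      have hfpos : ∀ ω, 0 < Real.exp (Φ (Z ε ω) / ε) := fun ω => Real.exp_pos _
      -- per-measure bounds
      have hint : ∀ P ∈ Ps, Integrable (fun ω => Real.exp (Φ (Z ε ω) / ε)) P := by
        intro P hP
        haveI := hprob P hP
        refine (integrable_const (1:ℝ)).mono' hfm.aestronglyMeasurable ?_
        refine Filter.Eventually.of_forall fun ω => ?_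
        rw [Real.norm_eq_abs, abs_of_pos (hfpos ω)]
        exact hfle1 ω
      have hxle : EG (fun ω => Real.exp (Φ (Z ε ω) / ε)) ≤ a + b := by
        rw [hEG]
        refine Real.sSup_le ?_ (by positivity)
        rintro _ ⟨P, hP, rfl⟩
        haveI := hprob P hP
        have hgint : Integrable (fun ω => A.indicator (fun _ => (1:ℝ)) ω + b) P :=
          ((integrable_const (1:ℝ)).indicator hA).add (integrable_const b)
        have hpt : ∀ ω, Real.exp (Φ (Z ε ω) / ε) ≤ A.indicator (fun _ => (1:ℝ)) ω + b := by
          intro ω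
          by_cases hmem : Z ε ω ∈ O
          · have : A.indicator (fun _ => (1:ℝ)) ω = 1 :=
              Set.indicator_of_mem (show ω ∈ A from hmem) _
            rw [this]
            linarith [hfle1 ω, hb0]
          · have h1 : A.indicator (fun _ => (1:ℝ)) ω = 0 :=
              Set.indicator_of_notMem (show ω ∉ A from hmem) _
            have h2 : Φ (Z ε ω) = -M := hΦout _ hmem
            rw [h1, h2, zero_add, hbdef]
        calc ∫ ω, Real.exp (Φ (Z ε ω) / ε) ∂P
            ≤ ∫ ω, (A.indicator (fun _ => (1:ℝ)) ω + b) ∂P :=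
              integral_mono (hint P hP) hgint hpt
          _ = (P A).toReal + b := by
              rw [integral_add ((integrable_const (1:ℝ)).indicator hA) (integrable_const b)]
              congr 1
              · exact integral_indicator_one (μ := P) hA
              · simp
          _ ≤ a + b := by
              have : (P A).toReal ≤ a := by
                rw [hadef, hcap]
                exact le_csSup hBddcap ⟨P, hP, rfl⟩
              linarith
      have hxpos : 0 < EG (fun ω => Real.exp (Φ (Z ε ω) / ε)) := by
        obtain ⟨P, hP⟩ := hne
        haveI := hprob P hP
        have hb_le_int : b ≤ ∫ ω, Real.exp (Φ (Z ε ω) / ε) ∂P := by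
          have : ∫ (_ : Ω), b ∂P = b := by simp
          rw [← this]
          exact integral_mono (integrable_const b) (hint P hP)
            (fun ω => hfgeb ω)
        have hBddint : BddAbove
            ((fun P : Measure Ω => ∫ ω, Real.exp (Φ (Z ε ω) / ε) ∂P) '' Ps) := by
          refine ⟨1, ?_⟩
          rintro _ ⟨Q, hQ, rfl⟩
          haveI := hprob Q hQ
          calc ∫ ω, Real.exp (Φ (Z ε ω) / ε) ∂Q ≤ ∫ (_ : Ω), (1:ℝ) ∂Q :=
                integral_mono (hint Q hQ) (integrable_const 1) hfle1
            _ = 1 := by simp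
        rw [hEG]
        exact lt_of_lt_of_le hb0
          (hb_le_int.trans (le_csSup hBddint ⟨P, hP, rfl⟩))
      have hkey := key_real hεpos hxpos hxle ha0 hb0
      have hlogb : ε * Real.log b = -M := by
        rw [hbdef, Real.log_exp]
        field_simp
      rw [hlogb] at hkey
      have hreal : ε * Real.log (EG (fun ω => Real.exp (Φ (Z ε ω) / ε)))
          - ε * Real.log 2 ≤ max (ε * Real.log a) (-M) := by linarith [hkey]
      calc ((ε * Real.log (EG (fun ω => Real.exp (Φ (Z ε ω) / ε)))
            - ε * Real.log 2 : ℝ) : EReal)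
          ≤ ((max (ε * Real.log a) (-M) : ℝ) : EReal) := EReal.coe_le_coe_iff.2 hreal
        _ = max ((ε * Real.log a : ℝ) : EReal) ((-M : ℝ) : EReal) := ereal_coe_max _ _
    -- combine everything
    have hliminf : S ≤ max L ((-M : ℝ) : EReal) := by
      calc S = liminf (fun ε : ℝ =>
            ((ε * Real.log (EG (fun ω => Real.exp (Φ (Z ε ω) / ε)))
              - ε * Real.log 2 : ℝ) : EReal)) (𝓝[>] (0:ℝ)) := (hdiff.liminf_eq).symm
        _ ≤ liminf (fun ε : ℝ =>
            max ((ε * Real.log (cap ((Z ε) ⁻¹' O)) : ℝ) : EReal) ((-M : ℝ) : EReal))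
            (𝓝[>] (0:ℝ)) := liminf_le_liminf hev
        _ ≤ max L ((-M : ℝ) : EReal) := liminf_max_const _ _ _
    have hfinal : -((I y₀ : ℝ≥0∞) : EReal) ≤ max L ((-M : ℝ) : EReal) := hSb.trans hliminf
    have hIcoe : ((I y₀ : ℝ≥0∞) : EReal) = (((I y₀).toReal : ℝ) : EReal) := by
      rw [← EReal.toReal_coe_ennreal,
        EReal.coe_toReal (by simp [htop]) (by simp)]
    have hMlt : ((-M : ℝ) : EReal) < -((I y₀ : ℝ≥0∞) : EReal) := by
      rw [hIcoe, ← EReal.coe_neg]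
      exact EReal.coe_lt_coe_iff.2 (by rw [hMdef]; linarith)
    rcases le_max_iff.1 hfinal with h | h
    · exact h
    · exact absurd h (not_le.2 hMlt)
  rw [EReal.neg_le]
  refine le_iInf₂ fun y hy => ?_
  rw [EReal.neg_le]
  by_cases hI : I y = ⊤
  · simp [hI]
  · exact main y hy hI
end

section
/- Under the Lipschitz assumptions above, for every m ≥ 1 and l > 0, sup over ‖f‖_H ≤ l, g ∈ 𝔸, |x| ≤ m, t ∈ [0,T] of |Ψ(f,g)(x,t)| is finite; moreover sup over the same set of |Ψ(f,g)(x, π_N(t)) − Ψ(f,g)(x,t)| ≤ C/√N for a constant C depending only on m, l, T, overline{σ} and the Lipschitz data, where π_N(t) = (k−1)T/N for t ∈ [(k−1)T/N, kT/N). -/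
open MeasureTheory intervalIntegral

/-- `X` solves the controlled ODE on `[0,T]` with continuous paths. -/
def SolvesCtrlODE (p d : ℕ) (T : ℝ)
    (b : (Fin p → ℝ) → (Fin p → ℝ))
    (σ : (Fin p → ℝ) → Matrix (Fin p) (Fin d) ℝ)
    (h : (Fin p → ℝ) → Fin p → Matrix (Fin d) (Fin d) ℝ)
    (f' : ℝ → (Fin d → ℝ)) (g' : ℝ → Matrix (Fin d) (Fin d) ℝ)
    (X : (Fin p → ℝ) → ℝ → (Fin p → ℝ)) : Prop :=
  (∀ x, ContinuousOn (X x) (Set.Icc 0 T)) ∧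
  ∀ x, ∀ t ∈ Set.Icc (0 : ℝ) T,
    X x t = x + ∫ s in (0 : ℝ)..t,
      (b (X x s) + (σ (X x s)).mulVec (f' s)
        + fun k => ∑ i, ∑ j, h (X x s) k i j * g' s i j)

/-- The dyadic-type projection `π_N(t) = (k-1)T/N` for `t ∈ [(k-1)T/N, kT/N)`. -/
noncomputable def piN (T : ℝ) (N : ℕ) (t : ℝ) : ℝ := (⌊t * N / T⌋ : ℝ) * T / N

/-- A finite product of real-valued a.e.-measurable coordinates is a.e. measurable. -/
lemma aemeasurable_pi' {ι : Type*} [Fintype ι] {α : Type*} [MeasurableSpace α]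
    {μ : MeasureTheory.Measure α} {f : α → ι → ℝ} (h : ∀ i, AEMeasurable (fun s => f s i) μ) :
    AEMeasurable f μ := by
  choose g hg hfg using h
  refine ⟨fun s i => g i s, measurable_pi_lambda _ hg, ?_⟩
  filter_upwards [MeasureTheory.ae_all_iff.mpr hfg] with s hs
  funext i
  exact hs i

set_option maxHeartbeats 2000000 in
theorem stmt_11 (p d : ℕ) (T : ℝ) (hT : 0 < T)
    (b : (Fin p → ℝ) → (Fin p → ℝ))
    (σ : (Fin p → ℝ) → Matrix (Fin p) (Fin d) ℝ)
    (h : (Fin p → ℝ) → Fin p → Matrix (Fin d) (Fin d) ℝ)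
    (L : ℝ) (hL : 0 ≤ L)
    (hb : ∀ x y, ‖b x - b y‖ ≤ L * ‖x - y‖)
    (hσ : ∀ x y, ∀ k i, |σ x k i - σ y k i| ≤ L * ‖x - y‖)
    (hh : ∀ x y, ∀ k i j, |h x k i j - h y k i j| ≤ L * ‖x - y‖)
    (S : Set (Matrix (Fin d) (Fin d) ℝ)) (σup : ℝ) (hσup : 0 ≤ σup)
    (hS : ∀ A ∈ S, ∀ i j, |A i j| ≤ σup)
    (m l : ℝ) (hm : 1 ≤ m) (hl : 0 < l) :
    -- uniform boundedness of Ψ(f,g)(x,t) over ‖f‖_H ≤ l, g ∈ 𝔸, |x| ≤ m, t ∈ [0,T]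
    (∃ B : ℝ, ∀ (f' : ℝ → (Fin d → ℝ)) (g' : ℝ → Matrix (Fin d) (Fin d) ℝ)
        (X : (Fin p → ℝ) → ℝ → (Fin p → ℝ)),
      (∀ i, Measurable fun s => f' s i) →
      IntervalIntegrable (fun s => ‖f' s‖ ^ 2) volume 0 T →
      (∫ s in (0 : ℝ)..T, ‖f' s‖ ^ 2) ≤ l ^ 2 →
      (∀ i j, Measurable fun s => g' s i j) →
      (∀ s ∈ Set.Icc (0 : ℝ) T, g' s ∈ S) →
      SolvesCtrlODE p d T b σ h f' g' X →
      ∀ x : Fin p → ℝ, ‖x‖ ≤ m → ∀ t ∈ Set.Icc (0 : ℝ) T, ‖X x t‖ ≤ B) ∧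
    -- uniform 1/√N modulus for the projection π_N
    (∃ C : ℝ, ∀ N : ℕ, 1 ≤ N →
      ∀ (f' : ℝ → (Fin d → ℝ)) (g' : ℝ → Matrix (Fin d) (Fin d) ℝ)
        (X : (Fin p → ℝ) → ℝ → (Fin p → ℝ)),
      (∀ i, Measurable fun s => f' s i) →
      IntervalIntegrable (fun s => ‖f' s‖ ^ 2) volume 0 T →
      (∫ s in (0 : ℝ)..T, ‖f' s‖ ^ 2) ≤ l ^ 2 →
      (∀ i j, Measurable fun s => g' s i j) →
      (∀ s ∈ Set.Icc (0 : ℝ) T, g' s ∈ S) →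
      SolvesCtrlODE p d T b σ h f' g' X →
      ∀ x : Fin p → ℝ, ‖x‖ ≤ m → ∀ t ∈ Set.Icc (0 : ℝ) T,
        ‖X x (piN T N t) - X x t‖ ≤ C / Real.sqrt N) := by
  classical
  -- ========== the master estimate ==========
  have master : ∃ B C : ℝ, 0 ≤ B ∧ 0 ≤ C ∧
      ∀ (f' : ℝ → (Fin d → ℝ)) (g' : ℝ → Matrix (Fin d) (Fin d) ℝ)
        (X : (Fin p → ℝ) → ℝ → (Fin p → ℝ)),
      (∀ i, Measurable fun s => f' s i) →
      IntervalIntegrable (fun s => ‖f' s‖ ^ 2) volume 0 T →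
      (∫ s in (0 : ℝ)..T, ‖f' s‖ ^ 2) ≤ l ^ 2 →
      (∀ i j, Measurable fun s => g' s i j) →
      (∀ s ∈ Set.Icc (0 : ℝ) T, g' s ∈ S) →
      SolvesCtrlODE p d T b σ h f' g' X →
      ∀ x : Fin p → ℝ, ‖x‖ ≤ m →
        (∀ t ∈ Set.Icc (0 : ℝ) T, ‖X x t‖ ≤ B) ∧
        (∀ r t : ℝ, 0 ≤ r → r ≤ t → t ≤ T →
          ‖X x t - X x r‖ ≤ C * (t - r) + C * Real.sqrt (t - r)) := by
    -- constants
    obtain ⟨b0, hb0def⟩ : ∃ b0 : ℝ, b0 = ‖b 0‖ := ⟨_, rfl⟩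
    obtain ⟨S0, hS0def⟩ : ∃ S0 : ℝ, S0 = ∑ k : Fin p, ∑ i : Fin d, |σ 0 k i| := ⟨_, rfl⟩
    obtain ⟨H0, hH0def⟩ : ∃ H0 : ℝ, H0 = ∑ k : Fin p, ∑ i : Fin d, ∑ j : Fin d, |h 0 k i j| := ⟨_, rfl⟩
    have hb0 : 0 ≤ b0 := hb0def ▸ norm_nonneg _
    have hS0 : 0 ≤ S0 := hS0def ▸ Finset.sum_nonneg fun _ _ =>
      Finset.sum_nonneg fun _ _ => abs_nonneg _
    have hH0 : 0 ≤ H0 := hH0def ▸ Finset.sum_nonneg fun _ _ => Finset.sum_nonneg fun _ _ =>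
      Finset.sum_nonneg fun _ _ => abs_nonneg _
    obtain ⟨a1, ha1def⟩ : ∃ a1 : ℝ, a1 = b0 + (d : ℝ) ^ 2 * H0 * σup := ⟨_, rfl⟩
    obtain ⟨a2, ha2def⟩ : ∃ a2 : ℝ, a2 = (d : ℝ) * S0 := ⟨_, rfl⟩
    obtain ⟨c1, hc1def⟩ : ∃ c1 : ℝ, c1 = L * (1 + (d : ℝ) ^ 2 * σup) := ⟨_, rfl⟩
    obtain ⟨c2, hc2def⟩ : ∃ c2 : ℝ, c2 = L * (d : ℝ) := ⟨_, rfl⟩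
    have hd2 : (0:ℝ) ≤ (d : ℝ) ^ 2 := sq_nonneg _
    have hdd : (0:ℝ) ≤ (d : ℝ) := Nat.cast_nonneg d
    have ha1 : 0 ≤ a1 := by
      rw [ha1def]; exact add_nonneg hb0 (mul_nonneg (mul_nonneg hd2 hH0) hσup)
    have ha2 : 0 ≤ a2 := by rw [ha2def]; exact mul_nonneg hdd hS0
    have hc1 : 0 ≤ c1 := by
      rw [hc1def]; exact mul_nonneg hL (by linarith [mul_nonneg hd2 hσup])
    have hc2 : 0 ≤ c2 := by rw [hc2def]; exact mul_nonneg hL hdd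
    obtain ⟨abar, habardef⟩ : ∃ abar : ℝ, abar = a1 * T + a2 * (l * Real.sqrt T) := ⟨_, rfl⟩
    have habar : 0 ≤ abar := by
      rw [habardef]
      exact add_nonneg (mul_nonneg ha1 hT.le)
        (mul_nonneg ha2 (mul_nonneg hl.le (Real.sqrt_nonneg _)))
    have hq0 : 0 ≤ c1 + c2 * l := add_nonneg hc1 (mul_nonneg hc2 hl.le)
    have hqpos : 0 < 2 * (c1 + c2 * l) + 1 := by linarith
    obtain ⟨η, hηdef⟩ : ∃ η : ℝ, η = min 1 ((1 / (2 * (c1 + c2 * l) + 1)) ^ 2) := ⟨_, rfl⟩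
    have hη0 : 0 < η := by
      rw [hηdef]; exact lt_min one_pos (pow_pos (div_pos one_pos hqpos) 2)
    have hη1 : η ≤ 1 := by rw [hηdef]; exact min_le_left _ _
    have hηhalf : c1 * η + c2 * l * Real.sqrt η ≤ 1 / 2 := by
      have hsqη : Real.sqrt η ≤ 1 / (2 * (c1 + c2 * l) + 1) := by
        rw [hηdef]
        have h1 : Real.sqrt (min 1 ((1 / (2 * (c1 + c2 * l) + 1)) ^ 2))
            ≤ Real.sqrt ((1 / (2 * (c1 + c2 * l) + 1)) ^ 2) :=
          Real.sqrt_le_sqrt (min_le_right _ _)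
        rwa [Real.sqrt_sq (le_of_lt (div_pos one_pos hqpos))] at h1
      have hηsq : η ≤ Real.sqrt η := by
        rw [Real.le_sqrt hη0.le hη0.le]
        nlinarith
      have e1 : c1 * η ≤ c1 * Real.sqrt η := mul_le_mul_of_nonneg_left hηsq hc1
      have e2 : (c1 + c2 * l) * Real.sqrt η ≤ (c1 + c2 * l) * (1 / (2 * (c1 + c2 * l) + 1)) :=
        mul_le_mul_of_nonneg_left hsqη hq0
      have e3 : (c1 + c2 * l) * (1 / (2 * (c1 + c2 * l) + 1)) ≤ 1 / 2 := by
        rw [mul_one_div, div_le_div_iff₀ hqpos (by norm_num : (0:ℝ) < 2)]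
        linarith
      have e4 : (c1 + c2 * l) * Real.sqrt η = c1 * Real.sqrt η + c2 * l * Real.sqrt η := by
        ring
      linarith
    obtain ⟨n0, hn0def⟩ : ∃ n0 : ℕ, n0 = ⌈T / η⌉₊ := ⟨_, rfl⟩
    have hTn0 : T ≤ (n0 : ℝ) * η := by
      rw [hn0def]
      have h1 := Nat.le_ceil (T / η)
      rw [div_le_iff₀ hη0] at h1
      exact h1
    obtain ⟨D, hDdef⟩ : ∃ D : ℝ, D = m + abar := ⟨_, rfl⟩
    have hD1 : 1 ≤ D := by rw [hDdef]; linarith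
    have hD0 : 0 ≤ D := by linarith
    obtain ⟨B, hBdef⟩ : ∃ B : ℝ, B = 4 ^ n0 * D := ⟨_, rfl⟩
    have h4n : (1 : ℝ) ≤ 4 ^ n0 := one_le_pow₀ (by norm_num)
    have hB0 : 0 ≤ B := by rw [hBdef]; exact mul_nonneg (by positivity) hD0
    have hCC0 : 0 ≤ (a1 + c1 * B) + (a2 + c2 * B) * l :=
      add_nonneg (add_nonneg ha1 (mul_nonneg hc1 hB0))
        (mul_nonneg (add_nonneg ha2 (mul_nonneg hc2 hB0)) hl.le)
    refine ⟨B, (a1 + c1 * B) + (a2 + c2 * B) * l, hB0, hCC0, ?_⟩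
    intro f' g' X hf'meas hf'2 hf'l2 hg'meas hg'S hX x hx
    obtain ⟨hXcont, hXeq⟩ := hX
    have hXc : ContinuousOn (X x) (Set.Icc 0 T) := hXcont x
    -- integrability of ‖f'‖
    have hf'T : IntegrableOn (fun s => ‖f' s‖ ^ 2) (Set.Ioc 0 T) volume :=
      (intervalIntegrable_iff_integrableOn_Ioc_of_le hT.le).mp hf'2
    have hnfmeas : Measurable fun s => ‖f' s‖ := (measurable_pi_iff.mpr hf'meas).norm
    have hnfT : IntegrableOn (fun s => ‖f' s‖) (Set.Ioc 0 T) volume := by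
      refine Integrable.mono'
        ((integrableOn_const (C := (1:ℝ)) measure_Ioc_lt_top.ne).add hf'T)
        hnfmeas.aestronglyMeasurable ?_
      filter_upwards with s
      simp only [Real.norm_eq_abs, abs_of_nonneg (norm_nonneg (f' s)), Pi.add_apply]
      linarith only [sq_nonneg (‖f' s‖ - 1), sq_nonneg (‖f' s‖)]
    have hnfI : IntervalIntegrable (fun s => ‖f' s‖) volume 0 T :=
      (intervalIntegrable_iff_integrableOn_Ioc_of_le hT.le).mpr hnfT
    have hsub : ∀ {r t : ℝ}, 0 ≤ r → r ≤ t → t ≤ T → Set.uIcc r t ⊆ Set.uIcc 0 T := by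
      intro r t hr hrt htT
      rw [Set.uIcc_of_le hrt, Set.uIcc_of_le hT.le]
      exact Set.Icc_subset_Icc hr htT
    -- Cauchy-Schwarz type bound
    have hCS : ∀ r t : ℝ, 0 ≤ r → r ≤ t → t ≤ T →
        (∫ s in r..t, ‖f' s‖) ≤ l * Real.sqrt (t - r) := by
      intro r t hr hrt htT
      rcases eq_or_lt_of_le hrt with rfl | hlt
      · simp only [intervalIntegral.integral_same, sub_self, Real.sqrt_zero, mul_zero, le_refl]
      · have hd : 0 < t - r := sub_pos.mpr hlt
        have hu0 : 0 < Real.sqrt (t - r) := Real.sqrt_pos.mpr hd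
        obtain ⟨ε, hεdef⟩ : ∃ ε : ℝ, ε = l / Real.sqrt (t - r) := ⟨_, rfl⟩
        have hε0 : 0 < ε := by rw [hεdef]; exact div_pos hl hu0
        have hf'2sub : IntervalIntegrable (fun s => ‖f' s‖ ^ 2) volume r t :=
          hf'2.mono_set (hsub hr hrt htT)
        have hnfsub : IntervalIntegrable (fun s => ‖f' s‖) volume r t :=
          hnfI.mono_set (hsub hr hrt htT)
        have hsq : (∫ s in r..t, ‖f' s‖ ^ 2) ≤ l ^ 2 :=
          le_trans (intervalIntegral.integral_mono_interval hr hrt htT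
            (Filter.Eventually.of_forall fun s => sq_nonneg _) hf'2) hf'l2
        have hmaj : IntervalIntegrable (fun s => (ε + ‖f' s‖ ^ 2 / ε) / 2) volume r t :=
          ((_root_.intervalIntegrable_const (c := ε)).add (hf'2sub.div_const ε)).div_const 2
        have hss : Real.sqrt (t - r) * Real.sqrt (t - r) = t - r := Real.mul_self_sqrt hd.le
        calc (∫ s in r..t, ‖f' s‖)
            ≤ ∫ s in r..t, (ε + ‖f' s‖ ^ 2 / ε) / 2 := by
              apply intervalIntegral.integral_mono_on hrt hnfsub hmaj
              intro s _
              rw [le_div_iff₀ (by norm_num : (0:ℝ) < 2)]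
              have h1 : 0 ≤ (‖f' s‖ - ε) ^ 2 / ε := by positivity
              have h2 : (‖f' s‖ - ε) ^ 2 / ε = ε + ‖f' s‖ ^ 2 / ε - 2 * ‖f' s‖ := by
                field_simp
                ring
              linarith only [h1, h2]
          _ = ((t - r) * ε + (∫ s in r..t, ‖f' s‖ ^ 2) / ε) / 2 := by
              rw [intervalIntegral.integral_div]
              congr 1
              rw [intervalIntegral.integral_add (_root_.intervalIntegrable_const (c := ε))
                (hf'2sub.div_const ε), intervalIntegral.integral_div,
                intervalIntegral.integral_const, smul_eq_mul]
          _ ≤ ((t - r) * ε + l ^ 2 / ε) / 2 := by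
              have h3 : (∫ s in r..t, ‖f' s‖ ^ 2) / ε ≤ l ^ 2 / ε :=
                (div_le_div_iff_of_pos_right hε0).mpr hsq
              linarith only [h3]
          _ = l * Real.sqrt (t - r) := by
              have e1 : (t - r) * ε = l * Real.sqrt (t - r) := by
                rw [hεdef, mul_div_assoc', div_eq_iff hu0.ne', mul_assoc, hss]
                ring
              have e2 : l ^ 2 / ε = l * Real.sqrt (t - r) := by
                rw [hεdef, div_div_eq_mul_div, div_eq_iff hl.ne']
                ring
              rw [e1, e2]
              ring
    -- the driver term
    set F : ℝ → (Fin p → ℝ) := fun s => b (X x s) + (σ (X x s)).mulVec (f' s)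
        + fun k => ∑ i, ∑ j, h (X x s) k i j * g' s i j with hFdef
    have hXt : ∀ t ∈ Set.Icc (0:ℝ) T, X x t = x + ∫ s in (0:ℝ)..t, F s := by
      intro t ht
      simp only [hFdef]
      exact hXeq x t ht
    have hFk : ∀ s k, F s k = b (X x s) k + (∑ i, σ (X x s) k i * f' s i)
        + ∑ i, ∑ j, h (X x s) k i j * g' s i j := by
      intro s k
      simp [hFdef, Matrix.mulVec, dotProduct]
    -- pointwise bound on the driver
    have hFle : ∀ s, s ∈ Set.Icc (0:ℝ) T → ∀ M : ℝ, 0 ≤ M → ‖X x s‖ ≤ M →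
        ‖F s‖ ≤ a1 + c1 * M + (a2 + c2 * M) * ‖f' s‖ := by
      intro s hs M hM hXM
      have hnf0 : (0:ℝ) ≤ ‖f' s‖ := norm_nonneg _
      have hc1M : 0 ≤ c1 * M := mul_nonneg hc1 hM
      have hRHS : 0 ≤ a1 + c1 * M + (a2 + c2 * M) * ‖f' s‖ := by
        have := mul_nonneg (add_nonneg ha2 (mul_nonneg hc2 hM)) hnf0
        linarith only [this, hc1M, ha1]
      rw [pi_norm_le_iff_of_nonneg hRHS]
      intro k
      rw [Real.norm_eq_abs, hFk]
      have hbz : |b (X x s) k| ≤ b0 + L * M := by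
        have h1 : ‖b (X x s) k‖ ≤ ‖b (X x s)‖ := norm_le_pi_norm (b (X x s)) k
        have h2 : ‖b (X x s)‖ ≤ ‖b (X x s) - b 0‖ + ‖b 0‖ := by
          have h2' := norm_add_le (b (X x s) - b 0) (b 0)
          simpa using h2'
        have h3 := hb (X x s) 0
        rw [sub_zero] at h3
        rw [Real.norm_eq_abs] at h1
        have h4 : L * ‖X x s‖ ≤ L * M := mul_le_mul_of_nonneg_left hXM hL
        linarith only [h1, h2, h3, h4, hb0def]
      have hσz : ∀ i, |σ (X x s) k i| ≤ S0 + L * M := by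
        intro i
        have h1 := hσ (X x s) 0 k i
        rw [sub_zero] at h1
        have h2 : |σ 0 k i| ≤ S0 := by
          rw [hS0def]
          calc |σ 0 k i| ≤ ∑ i' : Fin d, |σ 0 k i'| :=
                Finset.single_le_sum (f := fun i' => |σ 0 k i'|)
                  (fun i' _ => abs_nonneg _) (Finset.mem_univ i)
            _ ≤ ∑ k' : Fin p, ∑ i' : Fin d, |σ 0 k' i'| :=
                Finset.single_le_sum (f := fun k' => ∑ i' : Fin d, |σ 0 k' i'|)
                  (fun k' _ => Finset.sum_nonneg fun _ _ => abs_nonneg _)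
                  (Finset.mem_univ k)
        have h3 := abs_sub_abs_le_abs_sub (σ (X x s) k i) (σ 0 k i)
        have h4 : L * ‖X x s‖ ≤ L * M := mul_le_mul_of_nonneg_left hXM hL
        linarith only [h1, h2, h3, h4]
      have hhz : ∀ i j, |h (X x s) k i j| ≤ H0 + L * M := by
        intro i j
        have h1 := hh (X x s) 0 k i j
        rw [sub_zero] at h1
        have h2 : |h 0 k i j| ≤ H0 := by
          rw [hH0def]
          calc |h 0 k i j| ≤ ∑ j' : Fin d, |h 0 k i j'| :=
                Finset.single_le_sum (f := fun j' => |h 0 k i j'|)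
                  (fun j' _ => abs_nonneg _) (Finset.mem_univ j)
            _ ≤ ∑ i' : Fin d, ∑ j' : Fin d, |h 0 k i' j'| :=
                Finset.single_le_sum (f := fun i' => ∑ j' : Fin d, |h 0 k i' j'|)
                  (fun i' _ => Finset.sum_nonneg fun _ _ => abs_nonneg _)
                  (Finset.mem_univ i)
            _ ≤ ∑ k' : Fin p, ∑ i' : Fin d, ∑ j' : Fin d, |h 0 k' i' j'| :=
                Finset.single_le_sum
                  (f := fun k' => ∑ i' : Fin d, ∑ j' : Fin d, |h 0 k' i' j'|)
                  (fun k' _ => Finset.sum_nonneg fun _ _ =>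
                    Finset.sum_nonneg fun _ _ => abs_nonneg _)
                  (Finset.mem_univ k)
        have h3 := abs_sub_abs_le_abs_sub (h (X x s) k i j) (h 0 k i j)
        have h4 : L * ‖X x s‖ ≤ L * M := mul_le_mul_of_nonneg_left hXM hL
        linarith only [h1, h2, h3, h4]
      have ht2 : |∑ i, σ (X x s) k i * f' s i| ≤ (d:ℝ) * ((S0 + L * M) * ‖f' s‖) := by
        calc |∑ i, σ (X x s) k i * f' s i| ≤ ∑ i, |σ (X x s) k i * f' s i| :=
              Finset.abs_sum_le_sum_abs _ _
          _ ≤ ∑ _i : Fin d, (S0 + L * M) * ‖f' s‖ := by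
              apply Finset.sum_le_sum
              intro i _
              rw [abs_mul]
              have hfi : |f' s i| ≤ ‖f' s‖ := by
                have := norm_le_pi_norm (f' s) i
                rwa [Real.norm_eq_abs] at this
              have hσnn : 0 ≤ S0 + L * M := by
                have := mul_nonneg hL hM
                linarith only [this, hS0]
              exact mul_le_mul (hσz i) hfi (abs_nonneg _) hσnn
          _ = (d:ℝ) * ((S0 + L * M) * ‖f' s‖) := by
              rw [Finset.sum_const, Finset.card_univ, Fintype.card_fin, nsmul_eq_mul]
      have ht3 : |∑ i, ∑ j, h (X x s) k i j * g' s i j|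
          ≤ (d:ℝ) * ((d:ℝ) * ((H0 + L * M) * σup)) := by
        calc |∑ i, ∑ j, h (X x s) k i j * g' s i j|
            ≤ ∑ i, |∑ j, h (X x s) k i j * g' s i j| := Finset.abs_sum_le_sum_abs _ _
          _ ≤ ∑ _i : Fin d, (d:ℝ) * ((H0 + L * M) * σup) := by
              apply Finset.sum_le_sum
              intro i _
              calc |∑ j, h (X x s) k i j * g' s i j| ≤ ∑ j, |h (X x s) k i j * g' s i j| :=
                    Finset.abs_sum_le_sum_abs _ _
                _ ≤ ∑ _j : Fin d, (H0 + L * M) * σup := by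
                    apply Finset.sum_le_sum
                    intro j _
                    rw [abs_mul]
                    have hgij : |g' s i j| ≤ σup := hS (g' s) (hg'S s hs) i j
                    have hhnn : 0 ≤ H0 + L * M := by
                      have := mul_nonneg hL hM
                      linarith only [this, hH0]
                    exact mul_le_mul (hhz i j) hgij (abs_nonneg _) hhnn
                _ = (d:ℝ) * ((H0 + L * M) * σup) := by
                    rw [Finset.sum_const, Finset.card_univ, Fintype.card_fin, nsmul_eq_mul]
          _ = (d:ℝ) * ((d:ℝ) * ((H0 + L * M) * σup)) := by
              rw [Finset.sum_const, Finset.card_univ, Fintype.card_fin, nsmul_eq_mul]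
      have habs : |b (X x s) k + (∑ i, σ (X x s) k i * f' s i)
          + ∑ i, ∑ j, h (X x s) k i j * g' s i j|
          ≤ |b (X x s) k| + |∑ i, σ (X x s) k i * f' s i|
            + |∑ i, ∑ j, h (X x s) k i j * g' s i j| :=
        (abs_add_le _ _).trans (add_le_add_left (abs_add_le _ _) _)
      have heq : a1 + c1 * M + (a2 + c2 * M) * ‖f' s‖
          = (b0 + L * M) + (d:ℝ) * ((S0 + L * M) * ‖f' s‖)
            + (d:ℝ) * ((d:ℝ) * ((H0 + L * M) * σup)) := by
        rw [ha1def, hc1def, ha2def, hc2def]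
        ring
      linarith only [hbz, ht2, ht3, habs, heq]
    -- measurability of the driver
    have hXam : AEMeasurable (X x) (volume.restrict (Set.Ioc 0 T)) :=
      (hXc.mono Set.Ioc_subset_Icc_self).aemeasurable measurableSet_Ioc
    have hbC : Continuous b := by
      have hlip : LipschitzWith (Real.toNNReal L) b := by
        apply LipschitzWith.of_dist_le_mul
        intro u v
        rw [dist_eq_norm, Real.coe_toNNReal L hL, dist_eq_norm]
        exact hb u v
      exact hlip.continuous
    have hσC : ∀ k i, Continuous fun z => σ z k i := by
      intro k i
      have hlip : LipschitzWith (Real.toNNReal L) fun z => σ z k i := by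
        apply LipschitzWith.of_dist_le_mul
        intro u v
        rw [Real.dist_eq, Real.coe_toNNReal L hL, dist_eq_norm]
        exact hσ u v k i
      exact hlip.continuous
    have hhC : ∀ k i j, Continuous fun z => h z k i j := by
      intro k i j
      have hlip : LipschitzWith (Real.toNNReal L) fun z => h z k i j := by
        apply LipschitzWith.of_dist_le_mul
        intro u v
        rw [Real.dist_eq, Real.coe_toNNReal L hL, dist_eq_norm]
        exact hh u v k i j
      exact hlip.continuous
    have hFam : AEStronglyMeasurable F (volume.restrict (Set.Ioc 0 T)) := by
      rw [aestronglyMeasurable_iff_aemeasurable]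
      apply aemeasurable_pi'
      intro k
      simp only [hFk]
      refine AEMeasurable.add (AEMeasurable.add ?_ ?_) ?_
      · exact ((continuous_apply k).comp hbC).measurable.comp_aemeasurable hXam
      · apply Finset.aemeasurable_fun_sum
        intro i _
        exact (((hσC k i).measurable.comp_aemeasurable hXam)).mul (hf'meas i).aemeasurable
      · apply Finset.aemeasurable_fun_sum
        intro i _
        apply Finset.aemeasurable_fun_sum
        intro j _
        exact (((hhC k i j).measurable.comp_aemeasurable hXam)).mul (hg'meas i j).aemeasurable
    -- a crude global bound on the path (depending on X)
    obtain ⟨s0, hs0mem, hs0max⟩ := isCompact_Icc.exists_isMaxOn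
      (Set.nonempty_Icc.mpr hT.le) hXc.norm
    have hMX0 : 0 ≤ ‖X x s0‖ := norm_nonneg _
    have hMXb : ∀ s ∈ Set.Icc (0:ℝ) T, ‖X x s‖ ≤ ‖X x s0‖ := isMaxOn_iff.mp hs0max
    -- integrability of the driver
    have hFI : IntervalIntegrable F volume 0 T := by
      rw [intervalIntegrable_iff_integrableOn_Ioc_of_le hT.le]
      refine Integrable.mono'
        (g := fun s => a1 + c1 * ‖X x s0‖ + (a2 + c2 * ‖X x s0‖) * ‖f' s‖) ?_ hFam ?_
      · exact (integrableOn_const (C := a1 + c1 * ‖X x s0‖)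
          measure_Ioc_lt_top.ne).add (hnfT.const_mul _)
      · rw [ae_restrict_iff' measurableSet_Ioc]
        filter_upwards with s hs
        exact hFle s (Set.Ioc_subset_Icc_self hs) ‖X x s0‖ hMX0
          (hMXb s (Set.Ioc_subset_Icc_self hs))
    -- the increment estimate
    have hinc : ∀ r t M : ℝ, 0 ≤ r → r ≤ t → t ≤ T → 0 ≤ M →
        (∀ s ∈ Set.Icc r t, ‖X x s‖ ≤ M) →
        ‖X x t - X x r‖ ≤ (a1 + c1 * M) * (t - r) + (a2 + c2 * M) * (l * Real.sqrt (t - r)) := by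
      intro r t M hr hrt htT hM hMb
      have hFrt := hFI.mono_set (hsub hr hrt htT)
      have hF0t := hFI.mono_set (hsub le_rfl (hr.trans hrt) htT)
      have hF0r := hFI.mono_set (hsub le_rfl hr (hrt.trans htT))
      have heq : X x t - X x r = ∫ s in r..t, F s := by
        rw [hXt t ⟨hr.trans hrt, htT⟩, hXt r ⟨hr, hrt.trans htT⟩, add_sub_add_left_eq_sub]
        exact intervalIntegral.integral_interval_sub_left hF0t hF0r
      rw [heq]
      have hnfrt := hnfI.mono_set (hsub hr hrt htT)
      have hmaj : IntervalIntegrable (fun s => a1 + c1 * M + (a2 + c2 * M) * ‖f' s‖) volume r t :=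
        (_root_.intervalIntegrable_const).add (hnfrt.const_mul _)
      calc ‖∫ s in r..t, F s‖ ≤ ∫ s in r..t, ‖F s‖ :=
            intervalIntegral.norm_integral_le_integral_norm hrt
        _ ≤ ∫ s in r..t, (a1 + c1 * M + (a2 + c2 * M) * ‖f' s‖) := by
            apply intervalIntegral.integral_mono_on hrt hFrt.norm hmaj
            intro s hs
            exact hFle s ⟨hr.trans hs.1, hs.2.trans htT⟩ M hM (hMb s hs)
        _ = (a1 + c1 * M) * (t - r) + (a2 + c2 * M) * ∫ s in r..t, ‖f' s‖ := by
            rw [intervalIntegral.integral_add (_root_.intervalIntegrable_const)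
              (hnfrt.const_mul _), intervalIntegral.integral_const_mul,
              intervalIntegral.integral_const, smul_eq_mul]
            ring
        _ ≤ (a1 + c1 * M) * (t - r) + (a2 + c2 * M) * (l * Real.sqrt (t - r)) := by
            have h1 := hCS r t hr hrt htT
            have h2 : 0 ≤ a2 + c2 * M := add_nonneg ha2 (mul_nonneg hc2 hM)
            have h3 := mul_le_mul_of_nonneg_left h1 h2
            linarith only [h3]
    -- the Gronwall-type induction
    have key : ∀ n : ℕ, ∀ t ∈ Set.Icc (0:ℝ) T, t ≤ (n : ℝ) * η → ‖X x t‖ ≤ 4 ^ n * D := by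
      intro n
      induction n with
      | zero =>
        intro t ht h0
        have ht0 : t = 0 := le_antisymm (by simpa using h0) ht.1
        subst ht0
        have h1 : X x 0 = x := by
          rw [hXt 0 ⟨le_rfl, hT.le⟩, intervalIntegral.integral_same, add_zero]
        rw [h1]
        simp only [pow_zero, one_mul]
        rw [hDdef]
        linarith only [hx, habar]
      | succ n ih =>
        intro t ht htn
        by_cases hcase : t ≤ (n : ℝ) * η
        · have h1 := ih t ht hcase
          have h2 : (4:ℝ) ^ n ≤ 4 ^ (n+1) := by
            apply pow_le_pow_right₀ (by norm_num) (Nat.le_succ n)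
          have h3 := mul_le_mul_of_nonneg_right h2 hD0; linarith only [h1, h3]
        · push_neg at hcase
          have hr0 : 0 ≤ (n : ℝ) * η := mul_nonneg (Nat.cast_nonneg n) hη0.le
          have hrt : (n : ℝ) * η ≤ t := hcase.le
          have hrT : (n : ℝ) * η ≤ T := hrt.trans ht.2
          have hIH : ‖X x ((n : ℝ) * η)‖ ≤ 4 ^ n * D := ih ((n : ℝ) * η) ⟨hr0, hrT⟩ le_rfl
          obtain ⟨τ, hτmem, hτmax⟩ := isCompact_Icc.exists_isMaxOn
            (Set.nonempty_Icc.mpr hrt)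
            ((hXc.mono (Set.Icc_subset_Icc hr0 ht.2)).norm)
          have hτmax' : ∀ s ∈ Set.Icc ((n:ℝ) * η) t, ‖X x s‖ ≤ ‖X x τ‖ :=
            isMaxOn_iff.mp hτmax
          have hM0 : 0 ≤ ‖X x τ‖ := norm_nonneg _
          have hτT : τ ≤ T := hτmem.2.trans ht.2
          have htn' : t ≤ (n : ℝ) * η + η := by
            push_cast at htn
            have hexp : ((n:ℝ) + 1) * η = (n : ℝ) * η + η := by ring
            linarith only [htn, hexp]
          have hτη : τ - (n : ℝ) * η ≤ η := by
            have h1 : τ ≤ t := hτmem.2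
            linarith only [h1, htn']
          have hτr0 : 0 ≤ τ - (n : ℝ) * η := sub_nonneg.mpr hτmem.1
          have hincτ := hinc ((n : ℝ) * η) τ ‖X x τ‖ hr0 hτmem.1 hτT hM0
            (fun s hs => hτmax' s ⟨hs.1, hs.2.trans hτmem.2⟩)
          have hs1 : Real.sqrt (τ - (n : ℝ) * η) ≤ Real.sqrt η := Real.sqrt_le_sqrt hτη
          have hs2 : Real.sqrt (τ - (n : ℝ) * η) ≤ Real.sqrt T :=
            Real.sqrt_le_sqrt (by linarith only [hτT, hr0])
          have h10 : c1 * (τ - (n : ℝ) * η) + c2 * l * Real.sqrt (τ - (n : ℝ) * η) ≤ 1 / 2 := by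
            refine le_trans ?_ hηhalf
            have e1 : c1 * (τ - (n : ℝ) * η) ≤ c1 * η := mul_le_mul_of_nonneg_left hτη hc1
            have e2 : c2 * l * Real.sqrt (τ - (n : ℝ) * η) ≤ c2 * l * Real.sqrt η :=
              mul_le_mul_of_nonneg_left hs1 (mul_nonneg hc2 hl.le)
            linarith only [e1, e2]
          have h11 : a1 * (τ - (n : ℝ) * η) + a2 * (l * Real.sqrt (τ - (n : ℝ) * η)) ≤ abar := by
            rw [habardef]
            have e1 : a1 * (τ - (n : ℝ) * η) ≤ a1 * T :=
              mul_le_mul_of_nonneg_left (by linarith only [hτT, hr0]) ha1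
            have e2 : a2 * (l * Real.sqrt (τ - (n : ℝ) * η)) ≤ a2 * (l * Real.sqrt T) :=
              mul_le_mul_of_nonneg_left (mul_le_mul_of_nonneg_left hs2 hl.le) ha2
            linarith only [e1, e2]
          have hnorm : ‖X x τ‖ ≤ ‖X x ((n : ℝ) * η)‖ + ‖X x τ - X x ((n : ℝ) * η)‖ := by
            have := norm_sub_norm_le (X x τ) (X x ((n : ℝ) * η))
            linarith only [this]
          have h12 : (a1 + c1 * ‖X x τ‖) * (τ - (n : ℝ) * η)
              + (a2 + c2 * ‖X x τ‖) * (l * Real.sqrt (τ - (n : ℝ) * η))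
              = (a1 * (τ - (n : ℝ) * η) + a2 * (l * Real.sqrt (τ - (n : ℝ) * η)))
                + ‖X x τ‖ * (c1 * (τ - (n : ℝ) * η) + c2 * l * Real.sqrt (τ - (n : ℝ) * η)) := by
            ring
          rw [h12] at hincτ
          have h13 : ‖X x τ‖ * (c1 * (τ - (n : ℝ) * η)
              + c2 * l * Real.sqrt (τ - (n : ℝ) * η)) ≤ ‖X x τ‖ * (1/2) :=
            mul_le_mul_of_nonneg_left h10 hM0
          have hMle : ‖X x τ‖ ≤ 4 ^ n * D + abar + ‖X x τ‖ * (1/2) := by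
            calc ‖X x τ‖ ≤ ‖X x ((n : ℝ) * η)‖ + ‖X x τ - X x ((n : ℝ) * η)‖ := hnorm
              _ ≤ 4 ^ n * D + ((a1 * (τ - (n : ℝ) * η) + a2 * (l * Real.sqrt (τ - (n : ℝ) * η)))
                  + ‖X x τ‖ * (c1 * (τ - (n : ℝ) * η)
                    + c2 * l * Real.sqrt (τ - (n : ℝ) * η))) := add_le_add hIH hincτ
              _ ≤ 4 ^ n * D + (abar + ‖X x τ‖ * (1/2)) :=
                  add_le_add_right (add_le_add h11 h13) _
              _ = 4 ^ n * D + abar + ‖X x τ‖ * (1/2) := by ring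
          have h14 : (1:ℝ) ≤ 4 ^ n := one_le_pow₀ (by norm_num)
          have h15 : abar ≤ D := by rw [hDdef]; linarith only [hm]
          have h16 : D ≤ 4 ^ n * D := by have hh' := mul_le_mul_of_nonneg_right h14 hD0; linarith only [hh']
          have h18 : (4:ℝ) ^ (n+1) * D = 4 * (4 ^ n * D) := by rw [pow_succ]; ring
          have hfinal : ‖X x τ‖ ≤ 4 ^ (n+1) * D := by linarith only [hMle, h15, h16, h18]
          exact le_trans (hτmax' t ⟨hrt, le_rfl⟩) hfinal
    have hbound : ∀ t ∈ Set.Icc (0:ℝ) T, ‖X x t‖ ≤ B := by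
      intro t ht
      rw [hBdef]
      exact key n0 t ht (ht.2.trans hTn0)
    refine ⟨hbound, ?_⟩
    intro r t hr hrt htT
    have h1 := hinc r t B hr hrt htT hB0
      (fun s hs => hbound s ⟨hr.trans hs.1, hs.2.trans htT⟩)
    have hsq0 : 0 ≤ Real.sqrt (t - r) := Real.sqrt_nonneg _
    have htr0 : 0 ≤ t - r := sub_nonneg.mpr hrt
    have c1B : 0 ≤ a1 + c1 * B := add_nonneg ha1 (mul_nonneg hc1 hB0)
    have c2B : 0 ≤ (a2 + c2 * B) * l := mul_nonneg (add_nonneg ha2 (mul_nonneg hc2 hB0)) hl.le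
    have e1 : ((a1 + c1 * B) + (a2 + c2 * B) * l) * (t - r)
        = (a1 + c1 * B) * (t - r) + ((a2 + c2 * B) * l) * (t - r) := by ring
    have e2 : ((a1 + c1 * B) + (a2 + c2 * B) * l) * Real.sqrt (t - r)
        = (a1 + c1 * B) * Real.sqrt (t - r) + ((a2 + c2 * B) * l) * Real.sqrt (t - r) := by ring
    have e3 : (a2 + c2 * B) * (l * Real.sqrt (t - r))
        = ((a2 + c2 * B) * l) * Real.sqrt (t - r) := by ring
    have p1 : 0 ≤ ((a2 + c2 * B) * l) * (t - r) := mul_nonneg c2B htr0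
    have p2 : 0 ≤ (a1 + c1 * B) * Real.sqrt (t - r) := mul_nonneg c1B hsq0
    linarith only [h1, e1, e2, e3, p1, p2]
  -- ========== deduce the two statements ==========
  obtain ⟨B, C, hB0, hC0, hmain⟩ := master
  constructor
  · exact ⟨B, fun f' g' X h1 h2 h3 h4 h5 h6 x hx =>
      (hmain f' g' X h1 h2 h3 h4 h5 h6 x hx).1⟩
  · refine ⟨C * T + C * Real.sqrt T, ?_⟩
    intro N hN f' g' X h1 h2 h3 h4 h5 h6 x hx t ht
    have hN1 : (1 : ℝ) ≤ (N : ℝ) := by exact_mod_cast hN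
    have hNpos : (0 : ℝ) < (N : ℝ) := by linarith only [hN1]
    have hsN1 : (1 : ℝ) ≤ Real.sqrt N := Real.one_le_sqrt.mpr hN1
    have hsNpos : (0 : ℝ) < Real.sqrt N := by linarith only [hsN1]
    have hz0 : (0 : ℝ) ≤ t * N / T := div_nonneg (mul_nonneg ht.1 hNpos.le) hT.le
    have hfl0 : (0 : ℝ) ≤ (⌊t * N / T⌋ : ℝ) := by
      exact_mod_cast Int.floor_nonneg.mpr hz0
    have hr0 : 0 ≤ piN T N t := by
      unfold piN
      positivity
    have hrt : piN T N t ≤ t := by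
      unfold piN
      have h1' : (⌊t * N / T⌋ : ℝ) ≤ t * N / T := Int.floor_le _
      rw [div_le_iff₀ hNpos]
      calc (⌊t * N / T⌋ : ℝ) * T ≤ t * N / T * T := mul_le_mul_of_nonneg_right h1' hT.le
        _ = t * N := by field_simp
    have htr : t - piN T N t ≤ T / N := by
      unfold piN
      have hTN0 : 0 < T / (N : ℝ) := div_pos hT hNpos
      have h1' : t * N / T < (⌊t * N / T⌋ : ℝ) + 1 := Int.lt_floor_add_one _
      have h2' := mul_lt_mul_of_pos_right h1' hTN0
      have h3' : t * N / T * (T / N) = t := by field_simp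
      have h4' : ((⌊t * N / T⌋ : ℝ) + 1) * (T / N) = (⌊t * N / T⌋ : ℝ) * T / N + T / N := by
        ring
      rw [h3', h4'] at h2'
      linarith only [h2']
    have keyest := (hmain f' g' X h1 h2 h3 h4 h5 h6 x hx).2 (piN T N t) t hr0 hrt ht.2
    rw [norm_sub_rev]
    have hsNN : Real.sqrt N ≤ N := by
      have h5' : ((N:ℝ)) ≤ ((N:ℝ)) ^ 2 := by have h7' := mul_le_mul_of_nonneg_right hN1 (le_trans zero_le_one hN1); linarith only [h7']
      have h6' := Real.sqrt_le_sqrt h5'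
      rwa [Real.sqrt_sq hNpos.le] at h6'
    have hTN : T / N ≤ T / Real.sqrt N := (div_le_div_iff_of_pos_left hT hNpos hsNpos).mpr hsNN
    have hsqtr : Real.sqrt (t - piN T N t) ≤ Real.sqrt T / Real.sqrt N := by
      rw [← Real.sqrt_div hT.le]
      exact Real.sqrt_le_sqrt htr
    have hstep : t - piN T N t ≤ T / Real.sqrt N := le_trans htr hTN
    have b1 : C * (t - piN T N t) ≤ C * (T / Real.sqrt N) :=
      mul_le_mul_of_nonneg_left hstep hC0
    have b2 : C * Real.sqrt (t - piN T N t) ≤ C * (Real.sqrt T / Real.sqrt N) :=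
      mul_le_mul_of_nonneg_left hsqtr hC0
    have hfin : C * (T / Real.sqrt N) + C * (Real.sqrt T / Real.sqrt N)
        = (C * T + C * Real.sqrt T) / Real.sqrt N := by
      field_simp
    linarith only [keyest, b1, b2, hfin]
end

section
/- For every l > 0, the map (f,g) ↦ Ψ^{(N)}(f,g) is continuous from ({f ∈ H : ‖f‖_H ≤ l} × 𝔸, with metric ρ_{HG}((f₁,g₁),(f₂,g₂)) = ‖f₁−f₂‖_∞ + ‖g₁−g₂‖_∞) into C(ℝ^p × [0,T], ℝ^p) with the topology of uniform convergence on compacts, where Ψ^{(N)} is the N-step Euler scheme defined recursively by Ψ^{(N)}(f,g)(x,t) = x + ∑_{k=1}^N b(Ψ^{(N)}(f,g)(x,(k−1)T/N))(kT/N ∧ t − (k−1)T/N ∧ t) + ∑_{k=1}^N σ(Ψ^{(N)}(f,g)(x,(k−1)T/N))(f(kT/N ∧ t) − f((k−1)T/N ∧ t)) + ∑_{k=1}^N h(Ψ^{(N)}(f,g)(x,(k−1)T/N))(g(kT/N ∧ t) − g((k−1)T/N ∧ t)). -/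
open MeasureTheory intervalIntegral

/-- `X = Ψ^{(N)}(f,g)` is the `N`-step Euler scheme driven by the paths `f` and `g`. -/
def IsEulerScheme (p d : ℕ) (T : ℝ) (N : ℕ)
    (b : (Fin p → ℝ) → (Fin p → ℝ))
    (σ : (Fin p → ℝ) → Matrix (Fin p) (Fin d) ℝ)
    (h : (Fin p → ℝ) → Fin p → Matrix (Fin d) (Fin d) ℝ)
    (f : ℝ → (Fin d → ℝ)) (g : ℝ → Matrix (Fin d) (Fin d) ℝ)
    (X : (Fin p → ℝ) → ℝ → (Fin p → ℝ)) : Prop :=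
  ∀ x t,
    X x t = x + ∑ k ∈ Finset.range N,
      ((min (((k : ℝ) + 1) * T / N) t - min ((k : ℝ) * T / N) t) •
          b (X x ((k : ℝ) * T / N))
        + (σ (X x ((k : ℝ) * T / N))).mulVec
            (f (min (((k : ℝ) + 1) * T / N) t) - f (min ((k : ℝ) * T / N) t))
        + fun j => ∑ a, ∑ c, h (X x ((k : ℝ) * T / N)) j a c *
            (g (min (((k : ℝ) + 1) * T / N) t) a c - g (min ((k : ℝ) * T / N) t) a c))

set_option maxHeartbeats 4000000 in
theorem stmt_13 (p d : ℕ) (T : ℝ) (hT : 0 < T) (N : ℕ) (hN : 1 ≤ N)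
    (b : (Fin p → ℝ) → (Fin p → ℝ))
    (σ : (Fin p → ℝ) → Matrix (Fin p) (Fin d) ℝ)
    (h : (Fin p → ℝ) → Fin p → Matrix (Fin d) (Fin d) ℝ)
    (L : ℝ) (hL : 0 ≤ L)
    (hb : ∀ x y, ‖b x - b y‖ ≤ L * ‖x - y‖)
    (hσ : ∀ x y, ∀ k i, |σ x k i - σ y k i| ≤ L * ‖x - y‖)
    (hh : ∀ x y, ∀ k i j, |h x k i j - h y k i j| ≤ L * ‖x - y‖)
    (S : Set (Matrix (Fin d) (Fin d) ℝ)) (σup : ℝ) (hσup : 0 ≤ σup)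
    (hS : ∀ A ∈ S, ∀ i j, |A i j| ≤ σup)
    (l : ℝ) (hl : 0 < l)
    -- the controls (f_n, g_n) and (f, g) together with their Euler schemes
    (f : ℝ → (Fin d → ℝ)) (f' : ℝ → (Fin d → ℝ))
    (hf'meas : ∀ i, Measurable fun s => f' s i)
    (hf'int : IntervalIntegrable (fun s => ‖f' s‖ ^ 2) volume 0 T)
    (hfH : (∫ s in (0 : ℝ)..T, ‖f' s‖ ^ 2) ≤ l ^ 2)
    (hfrep : ∀ t ∈ Set.Icc (0 : ℝ) T, ∀ i, f t i = ∫ s in (0 : ℝ)..t, f' s i)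
    (g : ℝ → Matrix (Fin d) (Fin d) ℝ) (g' : ℝ → Matrix (Fin d) (Fin d) ℝ)
    (hg'meas : ∀ i j, Measurable fun s => g' s i j)
    (hg'S : ∀ s ∈ Set.Icc (0 : ℝ) T, g' s ∈ S)
    (hgrep : ∀ t ∈ Set.Icc (0 : ℝ) T, ∀ i j, g t i j = ∫ s in (0 : ℝ)..t, g' s i j)
    (fn : ℕ → ℝ → (Fin d → ℝ)) (fn' : ℕ → ℝ → (Fin d → ℝ))
    (hfn'meas : ∀ n i, Measurable fun s => fn' n s i)
    (hfn'int : ∀ n, IntervalIntegrable (fun s => ‖fn' n s‖ ^ 2) volume 0 T)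
    (hfnH : ∀ n, (∫ s in (0 : ℝ)..T, ‖fn' n s‖ ^ 2) ≤ l ^ 2)
    (hfnrep : ∀ n, ∀ t ∈ Set.Icc (0 : ℝ) T, ∀ i, fn n t i = ∫ s in (0 : ℝ)..t, fn' n s i)
    (gn : ℕ → ℝ → Matrix (Fin d) (Fin d) ℝ) (gn' : ℕ → ℝ → Matrix (Fin d) (Fin d) ℝ)
    (hgn'meas : ∀ n i j, Measurable fun s => gn' n s i j)
    (hgn'S : ∀ n, ∀ s ∈ Set.Icc (0 : ℝ) T, gn' n s ∈ S)
    (hgnrep : ∀ n, ∀ t ∈ Set.Icc (0 : ℝ) T, ∀ i j,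
      gn n t i j = ∫ s in (0 : ℝ)..t, gn' n s i j)
    -- convergence in the sup-norm metric ρ_HG on [0,T]
    (hfconv : ∀ ε > (0 : ℝ), ∃ n₀, ∀ n ≥ n₀, ∀ t ∈ Set.Icc (0 : ℝ) T,
      ‖fn n t - f t‖ ≤ ε)
    (hgconv : ∀ ε > (0 : ℝ), ∃ n₀, ∀ n ≥ n₀, ∀ t ∈ Set.Icc (0 : ℝ) T, ∀ i j,
      |gn n t i j - g t i j| ≤ ε)
    (X : (Fin p → ℝ) → ℝ → (Fin p → ℝ))
    (Xn : ℕ → (Fin p → ℝ) → ℝ → (Fin p → ℝ))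
    (hX : IsEulerScheme p d T N b σ h f g X)
    (hXn : ∀ n, IsEulerScheme p d T N b σ h (fn n) (gn n) (Xn n)) :
    -- Ψ^{(N)}(f_n, g_n) → Ψ^{(N)}(f, g) uniformly on compact subsets of ℝ^p × [0,T]
    ∀ ε > (0 : ℝ), ∀ m : ℝ, ∃ n₀, ∀ n ≥ n₀, ∀ x : Fin p → ℝ, ‖x‖ ≤ m →
      ∀ t ∈ Set.Icc (0 : ℝ) T, ‖Xn n x t - X x t‖ ≤ ε := by
  intro ε hε m
  have hT0 : (0:ℝ) ≤ T := hT.le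
  have hNpos : (0:ℝ) < (N:ℝ) := by
    have : 0 < N := hN
    exact_mod_cast this
  have hNT : (N:ℝ) * T / N = T := by field_simp
  set m' : ℝ := max m 0 with hm'def
  have hm'0 : (0:ℝ) ≤ m' := le_max_right _ _
  have grid_mono : ∀ {a c : ℕ}, a ≤ c → (a : ℝ) * T / N ≤ (c : ℝ) * T / N := by
    intro a c hac
    have h1 : (a:ℝ) ≤ (c:ℝ) := Nat.cast_le.2 hac
    gcongr
  have grid_succ : ∀ k : ℕ, (k : ℝ) * T / N ≤ ((k : ℝ) + 1) * T / N := by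
    intro k
    have h1 : (k:ℝ) ≤ (k:ℝ) + 1 := by linarith
    gcongr
  have gridT : ∀ j : ℕ, j ≤ N → (j : ℝ) * T / N ≤ T := by
    intro j hj
    calc (j:ℝ) * T / N ≤ (N:ℝ) * T / N := grid_mono hj
      _ = T := hNT
  have grid_nonneg : ∀ k : ℕ, (0:ℝ) ≤ (k:ℝ) * T / N := by
    intro k; positivity
  -- increments of Cameron-Martin paths
  have key_abs : ∀ a : ℝ, |a| ≤ 1 + a ^ 2 := by
    intro a
    rcases abs_cases a with ⟨h1, _⟩ | ⟨h1, _⟩ <;> nlinarith [sq_nonneg (a-1), sq_nonneg (a+1)]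
  set Bf : ℝ := T + l ^ 2 with hBfdef
  set Bg : ℝ := σup * T with hBgdef
  have hBf0 : 0 ≤ Bf := by positivity
  have hBg0 : 0 ≤ Bg := mul_nonneg hσup hT0
  have incf : ∀ (F F' : ℝ → Fin d → ℝ), (∀ i, Measurable fun s => F' s i) →
      IntervalIntegrable (fun s => ‖F' s‖ ^ 2) volume 0 T →
      (∫ s in (0 : ℝ)..T, ‖F' s‖ ^ 2) ≤ l ^ 2 →
      (∀ t ∈ Set.Icc (0 : ℝ) T, ∀ i, F t i = ∫ s in (0 : ℝ)..t, F' s i) →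
      ∀ u s, 0 ≤ u → u ≤ s → s ≤ T → ∀ i, |F s i - F u i| ≤ Bf := by
    intro F F' hmeas hint hl2 hrep u s hu hus hsT i
    have hdom : IntervalIntegrable (fun r => 1 + ‖F' r‖ ^ 2) volume 0 T :=
      _root_.intervalIntegrable_const.add hint
    have hbound : ∀ r, |F' r i| ≤ 1 + ‖F' r‖ ^ 2 := by
      intro r
      calc |F' r i| ≤ ‖F' r‖ := by
            simpa [Real.norm_eq_abs] using norm_le_pi_norm (F' r) i
        _ ≤ 1 + ‖F' r‖ ^ 2 := by
            have := key_abs ‖F' r‖; rwa [abs_of_nonneg (norm_nonneg _)] at this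
    have hIi : IntervalIntegrable (fun r => F' r i) volume 0 T := by
      apply hdom.mono_fun ((hmeas i).aestronglyMeasurable)
      filter_upwards with r
      have h2 : (0:ℝ) ≤ 1 + ‖F' r‖ ^ 2 := by positivity
      simpa [Real.norm_eq_abs, abs_of_nonneg h2] using hbound r
    have sub1 : Set.uIcc u s ⊆ Set.uIcc (0:ℝ) T := by
      rw [Set.uIcc_of_le hus, Set.uIcc_of_le hT0]
      exact Set.Icc_subset_Icc hu hsT
    have sub2 : Set.uIcc (0:ℝ) u ⊆ Set.uIcc (0:ℝ) T := by
      rw [Set.uIcc_of_le hu, Set.uIcc_of_le hT0]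
      exact Set.Icc_subset_Icc le_rfl (hus.trans hsT)
    have sub3 : Set.uIcc (0:ℝ) s ⊆ Set.uIcc (0:ℝ) T := by
      rw [Set.uIcc_of_le (hu.trans hus), Set.uIcc_of_le hT0]
      exact Set.Icc_subset_Icc le_rfl hsT
    rw [hrep s ⟨hu.trans hus, hsT⟩ i, hrep u ⟨hu, hus.trans hsT⟩ i,
      intervalIntegral.integral_interval_sub_left (hIi.mono_set sub3) (hIi.mono_set sub2)]
    have habs : IntervalIntegrable (fun r => |F' r i|) volume u s := (hIi.mono_set sub1).abs
    calc |∫ r in u..s, F' r i| ≤ ∫ r in u..s, |F' r i| :=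
          intervalIntegral.abs_integral_le_integral_abs hus
      _ ≤ ∫ r in u..s, (1 + ‖F' r‖ ^ 2) := by
          apply intervalIntegral.integral_mono_on hus habs (hdom.mono_set sub1)
          intro r _; exact hbound r
      _ ≤ ∫ r in (0:ℝ)..T, (1 + ‖F' r‖ ^ 2) := by
          apply intervalIntegral.integral_mono_interval hu hus hsT ?_ hdom
          refine Filter.Eventually.of_forall fun r => ?_
          positivity
      _ = T + ∫ r in (0:ℝ)..T, ‖F' r‖ ^ 2 := by
          rw [intervalIntegral.integral_add _root_.intervalIntegrable_const hint,
            intervalIntegral.integral_const]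
          simp
      _ ≤ Bf := by rw [hBfdef]; linarith
  have incg : ∀ (G G' : ℝ → Matrix (Fin d) (Fin d) ℝ), (∀ i j, Measurable fun s => G' s i j) →
      (∀ s ∈ Set.Icc (0 : ℝ) T, G' s ∈ S) →
      (∀ t ∈ Set.Icc (0 : ℝ) T, ∀ i j, G t i j = ∫ s in (0 : ℝ)..t, G' s i j) →
      ∀ u s, 0 ≤ u → u ≤ s → s ≤ T → ∀ i j, |G s i j - G u i j| ≤ Bg := by
    intro G G' hmeas hGS hrep u s hu hus hsT i j
    have hbd : ∀ r ∈ Set.uIoc (0:ℝ) T, |G' r i j| ≤ σup := by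
      intro r hr
      rw [Set.uIoc_of_le hT0] at hr
      exact hS _ (hGS r ⟨hr.1.le, hr.2⟩) i j
    have hIi : IntervalIntegrable (fun r => G' r i j) volume 0 T := by
      apply (_root_.intervalIntegrable_const (c := σup)).mono_fun ((hmeas i j).aestronglyMeasurable)
      refine (MeasureTheory.ae_restrict_iff' measurableSet_uIoc).2
        (Filter.Eventually.of_forall fun r hr => ?_)
      simpa [Real.norm_eq_abs, abs_of_nonneg hσup] using hbd r hr
    have sub2 : Set.uIcc (0:ℝ) u ⊆ Set.uIcc (0:ℝ) T := by
      rw [Set.uIcc_of_le hu, Set.uIcc_of_le hT0]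
      exact Set.Icc_subset_Icc le_rfl (hus.trans hsT)
    have sub3 : Set.uIcc (0:ℝ) s ⊆ Set.uIcc (0:ℝ) T := by
      rw [Set.uIcc_of_le (hu.trans hus), Set.uIcc_of_le hT0]
      exact Set.Icc_subset_Icc le_rfl hsT
    rw [hrep s ⟨hu.trans hus, hsT⟩ i j, hrep u ⟨hu, hus.trans hsT⟩ i j,
      intervalIntegral.integral_interval_sub_left (hIi.mono_set sub3) (hIi.mono_set sub2)]
    have hsubo : Set.uIoc u s ⊆ Set.uIoc (0:ℝ) T := by
      rw [Set.uIoc_of_le hus, Set.uIoc_of_le hT0]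
      exact Set.Ioc_subset_Ioc hu hsT
    have h1 : ‖∫ r in u..s, G' r i j‖ ≤ σup * |s - u| :=
      intervalIntegral.norm_integral_le_of_norm_le_const (fun r hr => by
        simpa [Real.norm_eq_abs] using hbd r (hsubo hr))
    rw [Real.norm_eq_abs] at h1
    calc |∫ r in u..s, G' r i j| ≤ σup * |s - u| := h1
      _ ≤ Bg := by
          rw [hBgdef, abs_of_nonneg (by linarith)]
          have : s - u ≤ T := by linarith
          nlinarith
  -- linear-growth constants
  obtain ⟨Cσ0, hCσ0⟩ := Finite.exists_le (fun q : Fin p × Fin d => |σ 0 q.1 q.2|)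
  obtain ⟨Ch0, hCh0⟩ := Finite.exists_le (fun q : Fin p × Fin d × Fin d => |h 0 q.1 q.2.1 q.2.2|)
  set Cb : ℝ := ‖b 0‖ with hCbdef
  set Cσ : ℝ := max Cσ0 0 with hCσdef
  set Ch : ℝ := max Ch0 0 with hChdef
  have hCb0 : 0 ≤ Cb := norm_nonneg _
  have hCσnn : 0 ≤ Cσ := le_max_right _ _
  have hChnn : 0 ≤ Ch := le_max_right _ _
  have hbg : ∀ z : Fin p → ℝ, ‖b z‖ ≤ Cb + L * ‖z‖ := by
    intro z
    calc ‖b z‖ = ‖(b z - b 0) + b 0‖ := by rw [sub_add_cancel]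
      _ ≤ ‖b z - b 0‖ + ‖b 0‖ := norm_add_le _ _
      _ ≤ L * ‖z - 0‖ + Cb := add_le_add (hb z 0) le_rfl
      _ = Cb + L * ‖z‖ := by rw [sub_zero]; ring
  have hσg : ∀ (z : Fin p → ℝ) k i, |σ z k i| ≤ Cσ + L * ‖z‖ := by
    intro z k i
    calc |σ z k i| = |(σ z k i - σ 0 k i) + σ 0 k i| := by ring_nf
      _ ≤ |σ z k i - σ 0 k i| + |σ 0 k i| := abs_add_le _ _
      _ ≤ L * ‖z - 0‖ + Cσ0 := add_le_add (hσ z 0 k i) (hCσ0 (k, i))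
      _ ≤ Cσ + L * ‖z‖ := by rw [sub_zero]; have := le_max_left Cσ0 (0:ℝ); linarith
  have hhg : ∀ (z : Fin p → ℝ) k i j, |h z k i j| ≤ Ch + L * ‖z‖ := by
    intro z k i j
    calc |h z k i j| = |(h z k i j - h 0 k i j) + h 0 k i j| := by ring_nf
      _ ≤ |h z k i j - h 0 k i j| + |h 0 k i j| := abs_add_le _ _
      _ ≤ L * ‖z - 0‖ + Ch0 := add_le_add (hh z 0 k i j) (hCh0 (k, i, j))
      _ ≤ Ch + L * ‖z‖ := by rw [sub_zero]; have := le_max_left Ch0 (0:ℝ); linarith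
  -- vanishing of the k-th Euler increment when t is to the left of the k-th grid point
  have vanish : ∀ (F : ℝ → Fin d → ℝ) (G : ℝ → Matrix (Fin d) (Fin d) ℝ)
      (z : Fin p → ℝ) (k : ℕ) (t : ℝ), t ≤ (k:ℝ) * T / N →
      ((min (((k : ℝ) + 1) * T / N) t - min ((k : ℝ) * T / N) t) • b z
        + (σ z).mulVec (F (min (((k : ℝ) + 1) * T / N) t) - F (min ((k : ℝ) * T / N) t))
        + fun j => ∑ a, ∑ c, h z j a c *
            (G (min (((k : ℝ) + 1) * T / N) t) a c - G (min ((k : ℝ) * T / N) t) a c)) = 0 := by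
    intro F G z k t ht
    have h1 : min ((k:ℝ) * T / N) t = t := min_eq_right ht
    have h2 : min (((k:ℝ) + 1) * T / N) t = t := min_eq_right (ht.trans (grid_succ k))
    rw [h1, h2]
    funext j
    simp [Matrix.mulVec, dotProduct]
  have hzero : ∀ (F : ℝ → Fin d → ℝ) (G : ℝ → Matrix (Fin d) (Fin d) ℝ)
      (Y : (Fin p → ℝ) → ℝ → (Fin p → ℝ)), IsEulerScheme p d T N b σ h F G Y →
      ∀ x, Y x 0 = x := by
    intro F G Y hY x
    rw [hY x 0, Finset.sum_eq_zero, add_zero]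
    intro k _
    exact vanish F G _ k 0 (grid_nonneg k)
  -- a priori bound on the scheme X on the grid
  have termb : ∀ (z : Fin p → ℝ) (W u s : ℝ), 0 ≤ u → u ≤ s → s ≤ T → ‖z‖ ≤ W → 0 ≤ W →
      ‖(s - u) • b z + (σ z).mulVec (f s - f u)
        + fun j => ∑ a, ∑ c, h z j a c * (g s a c - g u a c)‖
      ≤ T * (Cb + L * W) + (d:ℝ) * ((Cσ + L * W) * Bf) + (d:ℝ) * (d:ℝ) * ((Ch + L * W) * Bg) := by
    intro z W u s hu hus hsT hzW hW0
    have hFinc : ∀ i, |f s i - f u i| ≤ Bf := incf f f' hf'meas hf'int hfH hfrep u s hu hus hsT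
    have hGinc : ∀ a c, |g s a c - g u a c| ≤ Bg := incg g g' hg'meas hg'S hgrep u s hu hus hsT
    have hCbW : 0 ≤ Cb + L * W := by positivity
    have hCσW : 0 ≤ Cσ + L * W := by positivity
    have hChW : 0 ≤ Ch + L * W := by positivity
    rw [pi_norm_le_iff_of_nonneg (by positivity)]
    intro j
    simp only [Pi.add_apply, Pi.smul_apply, Pi.sub_apply, smul_eq_mul, Matrix.mulVec,
      dotProduct, Real.norm_eq_abs]
    have h1 : |(s - u) * b z j| ≤ T * (Cb + L * W) := by
      rw [abs_mul]
      apply mul_le_mul ?_ ?_ (abs_nonneg _) hT0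
      · rw [abs_of_nonneg (by linarith)]; linarith
      · calc |b z j| ≤ ‖b z‖ := by
              simpa [Real.norm_eq_abs] using norm_le_pi_norm (b z) j
          _ ≤ Cb + L * ‖z‖ := hbg z
          _ ≤ Cb + L * W := by nlinarith
    have h2 : |∑ i, σ z j i * (f s i - f u i)| ≤ (d:ℝ) * ((Cσ + L * W) * Bf) := by
      calc |∑ i, σ z j i * (f s i - f u i)| ≤ ∑ i, |σ z j i * (f s i - f u i)| :=
            Finset.abs_sum_le_sum_abs _ _
        _ ≤ ∑ _i : Fin d, (Cσ + L * W) * Bf := by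
            apply Finset.sum_le_sum
            intro i _
            rw [abs_mul]
            apply mul_le_mul ?_ (hFinc i) (abs_nonneg _) hCσW
            calc |σ z j i| ≤ Cσ + L * ‖z‖ := hσg z j i
              _ ≤ Cσ + L * W := by nlinarith
        _ = (d:ℝ) * ((Cσ + L * W) * Bf) := by
            rw [Finset.sum_const, Finset.card_univ, Fintype.card_fin, nsmul_eq_mul]
    have h3 : |∑ a, ∑ c, h z j a c * (g s a c - g u a c)|
        ≤ (d:ℝ) * (d:ℝ) * ((Ch + L * W) * Bg) := by
      calc |∑ a, ∑ c, h z j a c * (g s a c - g u a c)|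
          ≤ ∑ a, |∑ c, h z j a c * (g s a c - g u a c)| := Finset.abs_sum_le_sum_abs _ _
        _ ≤ ∑ _a : Fin d, (d:ℝ) * ((Ch + L * W) * Bg) := by
            apply Finset.sum_le_sum
            intro a _
            calc |∑ c, h z j a c * (g s a c - g u a c)|
                ≤ ∑ c, |h z j a c * (g s a c - g u a c)| := Finset.abs_sum_le_sum_abs _ _
              _ ≤ ∑ _c : Fin d, (Ch + L * W) * Bg := by
                  apply Finset.sum_le_sum
                  intro c _
                  rw [abs_mul]
                  apply mul_le_mul ?_ (hGinc a c) (abs_nonneg _) hChW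
                  calc |h z j a c| ≤ Ch + L * ‖z‖ := hhg z j a c
                    _ ≤ Ch + L * W := by nlinarith
              _ = (d:ℝ) * ((Ch + L * W) * Bg) := by
                  rw [Finset.sum_const, Finset.card_univ, Fintype.card_fin, nsmul_eq_mul]
        _ = (d:ℝ) * (d:ℝ) * ((Ch + L * W) * Bg) := by
            rw [Finset.sum_const, Finset.card_univ, Fintype.card_fin, nsmul_eq_mul]; ring
    calc |(s - u) * b z j + (∑ i, σ z j i * (f s i - f u i))
          + ∑ a, ∑ c, h z j a c * (g s a c - g u a c)|
        ≤ |(s - u) * b z j| + |∑ i, σ z j i * (f s i - f u i)|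
          + |∑ a, ∑ c, h z j a c * (g s a c - g u a c)| := abs_add_three _ _ _
      _ ≤ T * (Cb + L * W) + (d:ℝ) * ((Cσ + L * W) * Bf)
          + (d:ℝ) * (d:ℝ) * ((Ch + L * W) * Bg) := by linarith
  have Mlem : ∃ M : ℝ, 0 ≤ M ∧ ∀ x : Fin p → ℝ, ‖x‖ ≤ m' →
      ∀ j : ℕ, j ≤ N → ‖X x ((j:ℝ) * T / N)‖ ≤ M := by
    have main : ∀ K : ℕ, K ≤ N → ∃ M : ℝ, 0 ≤ M ∧ ∀ x : Fin p → ℝ, ‖x‖ ≤ m' →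
        ∀ j : ℕ, j ≤ K → ‖X x ((j:ℝ) * T / N)‖ ≤ M := by
      intro K
      induction K with
      | zero =>
        intro _
        refine ⟨m', hm'0, fun x hx j hj => ?_⟩
        have : j = 0 := Nat.le_zero.mp hj
        subst this
        have h0 : ((0:ℕ):ℝ) * T / N = 0 := by norm_num
        rw [h0, hzero f g X hX x]
        exact hx
      | succ K ih =>
        intro hK1
        obtain ⟨M, hM0, hM⟩ := ih (Nat.le_of_succ_le hK1)
        set B : ℝ := T * (Cb + L * M) + (d:ℝ) * ((Cσ + L * M) * Bf)
          + (d:ℝ) * (d:ℝ) * ((Ch + L * M) * Bg) with hBdef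
        have hB0 : 0 ≤ B := by
          rw [hBdef]
          have h1 : 0 ≤ Cb + L * M := by positivity
          have h2 : 0 ≤ Cσ + L * M := by positivity
          have h3 : 0 ≤ Ch + L * M := by positivity
          have d0 : (0:ℝ) ≤ (d:ℝ) := Nat.cast_nonneg d
          positivity
        refine ⟨max M (m' + (N:ℝ) * B), le_trans hM0 (le_max_left _ _), ?_⟩
        intro x hx j hj
        rcases eq_or_lt_of_le hj with heq | hlt
        · subst heq
          set t' : ℝ := ((K+1:ℕ):ℝ) * T / N with ht'def
          have ht'T : t' ≤ T := gridT (K+1) hK1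
          refine le_trans ?_ (le_max_right _ _)
          rw [hX x t']
          refine le_trans (norm_add_le _ _) (add_le_add hx ?_)
          refine le_trans (norm_sum_le _ _) ?_
          refine le_trans (Finset.sum_le_card_nsmul _ _ B ?_) ?_
          · intro k _
            by_cases hk : k < K + 1
            · have hu0 : 0 ≤ min ((k:ℝ) * T / N) t' := le_min (grid_nonneg k) (by positivity)
              have hus : min ((k:ℝ) * T / N) t' ≤ min (((k:ℝ)+1) * T / N) t' :=
                min_le_min (grid_succ k) le_rfl
              have hsT : min (((k:ℝ)+1) * T / N) t' ≤ T := (min_le_right _ _).trans ht'T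
              exact termb _ M _ _ hu0 hus hsT (hM x hx k (Nat.lt_succ_iff.mp hk)) hM0
            · push_neg at hk
              have hle : t' ≤ (k:ℝ) * T / N := by
                rw [ht'def]; exact grid_mono hk
              rw [vanish f g _ k t' hle]
              simpa using hB0
          · rw [Finset.card_range, nsmul_eq_mul]
        · exact le_trans (hM x hx j (Nat.lt_succ_iff.mp hlt)) (le_max_left _ _)
    obtain ⟨M, hM0, hM⟩ := main N le_rfl
    exact ⟨M, hM0, hM⟩
  obtain ⟨M, hM0, hMX⟩ := Mlem
  set Cη : ℝ := T * L + (d:ℝ) * (L * Bf) + (d:ℝ) * (d:ℝ) * (L * Bg) with hCηdef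
  set Cδ : ℝ := (d:ℝ) * (2 * (Cσ + L * M)) + (d:ℝ) * (d:ℝ) * (2 * (Ch + L * M)) with hCδdef
  have hCη0 : 0 ≤ Cη := by
    rw [hCηdef]
    have d0 : (0:ℝ) ≤ (d:ℝ) := Nat.cast_nonneg d
    positivity
  have hCδ0 : 0 ≤ Cδ := by
    rw [hCδdef]
    have h2 : 0 ≤ Cσ + L * M := by positivity
    have h3 : 0 ≤ Ch + L * M := by positivity
    have d0 : (0:ℝ) ≤ (d:ℝ) := Nat.cast_nonneg d
    positivity
  -- the one-step difference estimate
  have termdiff : ∀ (η δ : ℝ), 0 ≤ η → 0 ≤ δ → ∀ (n : ℕ) (z zn : Fin p → ℝ) (u s : ℝ),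
      0 ≤ u → u ≤ s → s ≤ T → ‖zn - z‖ ≤ η → ‖z‖ ≤ M →
      (∀ r ∈ Set.Icc (0:ℝ) T, ∀ i, |fn n r i - f r i| ≤ δ) →
      (∀ r ∈ Set.Icc (0:ℝ) T, ∀ a c, |gn n r a c - g r a c| ≤ δ) →
      ‖((s - u) • b zn + (σ zn).mulVec (fn n s - fn n u)
          + fun j => ∑ a, ∑ c, h zn j a c * (gn n s a c - gn n u a c))
        - ((s - u) • b z + (σ z).mulVec (f s - f u)
          + fun j => ∑ a, ∑ c, h z j a c * (g s a c - g u a c))‖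
        ≤ Cη * η + Cδ * δ := by
    intro η δ hη hδ n z zn u s hu hus hsT hzz hzM hfδ hgδ
    have hFinc : ∀ i, |fn n s i - fn n u i| ≤ Bf :=
      incf (fn n) (fn' n) (hfn'meas n) (hfn'int n) (hfnH n) (hfnrep n) u s hu hus hsT
    have hGinc : ∀ a c, |gn n s a c - gn n u a c| ≤ Bg :=
      incg (gn n) (gn' n) (hgn'meas n) (hgn'S n) (hgnrep n) u s hu hus hsT
    have hsmem : s ∈ Set.Icc (0:ℝ) T := ⟨hu.trans hus, hsT⟩
    have humem : u ∈ Set.Icc (0:ℝ) T := ⟨hu, hus.trans hsT⟩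
    have hbL : ∀ j, |b zn j - b z j| ≤ L * η := by
      intro j
      calc |b zn j - b z j| ≤ ‖b zn - b z‖ := by
            simpa [Real.norm_eq_abs] using norm_le_pi_norm (b zn - b z) j
        _ ≤ L * ‖zn - z‖ := hb zn z
        _ ≤ L * η := by nlinarith
    have hσL : ∀ j i, |σ zn j i - σ z j i| ≤ L * η := by
      intro j i
      calc |σ zn j i - σ z j i| ≤ L * ‖zn - z‖ := hσ zn z j i
        _ ≤ L * η := by nlinarith
    have hhL : ∀ j a c, |h zn j a c - h z j a c| ≤ L * η := by
      intro j a c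
      calc |h zn j a c - h z j a c| ≤ L * ‖zn - z‖ := hh zn z j a c
        _ ≤ L * η := by nlinarith
    have hσM : ∀ j i, |σ z j i| ≤ Cσ + L * M := by
      intro j i
      calc |σ z j i| ≤ Cσ + L * ‖z‖ := hσg z j i
        _ ≤ Cσ + L * M := by nlinarith
    have hhM : ∀ j a c, |h z j a c| ≤ Ch + L * M := by
      intro j a c
      calc |h z j a c| ≤ Ch + L * ‖z‖ := hhg z j a c
        _ ≤ Ch + L * M := by nlinarith
    have hfdiff : ∀ i, |(fn n s i - fn n u i) - (f s i - f u i)| ≤ 2 * δ := by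
      intro i
      calc |(fn n s i - fn n u i) - (f s i - f u i)|
          = |(fn n s i - f s i) - (fn n u i - f u i)| := by ring_nf
        _ ≤ |fn n s i - f s i| + |fn n u i - f u i| := abs_sub _ _
        _ ≤ δ + δ := add_le_add (hfδ s hsmem i) (hfδ u humem i)
        _ = 2 * δ := by ring
    have hgdiff : ∀ a c, |(gn n s a c - gn n u a c) - (g s a c - g u a c)| ≤ 2 * δ := by
      intro a c
      calc |(gn n s a c - gn n u a c) - (g s a c - g u a c)|
          = |(gn n s a c - g s a c) - (gn n u a c - g u a c)| := by ring_nf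
        _ ≤ |gn n s a c - g s a c| + |gn n u a c - g u a c| := abs_sub _ _
        _ ≤ δ + δ := add_le_add (hgδ s hsmem a c) (hgδ u humem a c)
        _ = 2 * δ := by ring
    have hsum : |s - u| ≤ T := by
      rw [abs_of_nonneg (by linarith)]; linarith
    rw [pi_norm_le_iff_of_nonneg (by positivity)]
    intro j
    simp only [Pi.sub_apply, Pi.add_apply, Pi.smul_apply, smul_eq_mul, Matrix.mulVec,
      dotProduct, Real.norm_eq_abs]
    have h2 : |∑ i, (σ zn j i * (fn n s i - fn n u i) - σ z j i * (f s i - f u i))|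
        ≤ (d:ℝ) * (L * η * Bf + (Cσ + L * M) * (2 * δ)) := by
      calc |∑ i, (σ zn j i * (fn n s i - fn n u i) - σ z j i * (f s i - f u i))|
          ≤ ∑ i, |σ zn j i * (fn n s i - fn n u i) - σ z j i * (f s i - f u i)| :=
            Finset.abs_sum_le_sum_abs _ _
        _ ≤ ∑ _i : Fin d, (L * η * Bf + (Cσ + L * M) * (2 * δ)) := by
            apply Finset.sum_le_sum
            intro i _
            have e : σ zn j i * (fn n s i - fn n u i) - σ z j i * (f s i - f u i)
                = (σ zn j i - σ z j i) * (fn n s i - fn n u i)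
                  + σ z j i * ((fn n s i - fn n u i) - (f s i - f u i)) := by ring
            rw [e]
            calc |(σ zn j i - σ z j i) * (fn n s i - fn n u i)
                  + σ z j i * ((fn n s i - fn n u i) - (f s i - f u i))|
                ≤ |(σ zn j i - σ z j i) * (fn n s i - fn n u i)|
                  + |σ z j i * ((fn n s i - fn n u i) - (f s i - f u i))| := abs_add_le _ _
              _ ≤ (L * η) * Bf + (Cσ + L * M) * (2 * δ) := by
                  rw [abs_mul, abs_mul]
                  apply add_le_add
                  · exact mul_le_mul (hσL j i) (hFinc i) (abs_nonneg _) (by positivity)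
                  · exact mul_le_mul (hσM j i) (hfdiff i) (abs_nonneg _) (by positivity)
              _ = L * η * Bf + (Cσ + L * M) * (2 * δ) := by ring
        _ = (d:ℝ) * (L * η * Bf + (Cσ + L * M) * (2 * δ)) := by
            rw [Finset.sum_const, Finset.card_univ, Fintype.card_fin, nsmul_eq_mul]
    have h3 : |∑ a, ∑ c, (h zn j a c * (gn n s a c - gn n u a c) - h z j a c * (g s a c - g u a c))|
        ≤ (d:ℝ) * (d:ℝ) * (L * η * Bg + (Ch + L * M) * (2 * δ)) := by
      calc |∑ a, ∑ c, (h zn j a c * (gn n s a c - gn n u a c) - h z j a c * (g s a c - g u a c))|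
          ≤ ∑ a, |∑ c, (h zn j a c * (gn n s a c - gn n u a c) - h z j a c * (g s a c - g u a c))| :=
            Finset.abs_sum_le_sum_abs _ _
        _ ≤ ∑ _a : Fin d, (d:ℝ) * (L * η * Bg + (Ch + L * M) * (2 * δ)) := by
            apply Finset.sum_le_sum
            intro a _
            calc |∑ c, (h zn j a c * (gn n s a c - gn n u a c) - h z j a c * (g s a c - g u a c))|
                ≤ ∑ c, |h zn j a c * (gn n s a c - gn n u a c) - h z j a c * (g s a c - g u a c)| :=
                  Finset.abs_sum_le_sum_abs _ _
              _ ≤ ∑ _c : Fin d, (L * η * Bg + (Ch + L * M) * (2 * δ)) := by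
                  apply Finset.sum_le_sum
                  intro c _
                  have e : h zn j a c * (gn n s a c - gn n u a c) - h z j a c * (g s a c - g u a c)
                      = (h zn j a c - h z j a c) * (gn n s a c - gn n u a c)
                        + h z j a c * ((gn n s a c - gn n u a c) - (g s a c - g u a c)) := by ring
                  rw [e]
                  calc |(h zn j a c - h z j a c) * (gn n s a c - gn n u a c)
                        + h z j a c * ((gn n s a c - gn n u a c) - (g s a c - g u a c))|
                      ≤ |(h zn j a c - h z j a c) * (gn n s a c - gn n u a c)|
                        + |h z j a c * ((gn n s a c - gn n u a c) - (g s a c - g u a c))| :=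
                        abs_add_le _ _
                    _ ≤ (L * η) * Bg + (Ch + L * M) * (2 * δ) := by
                        rw [abs_mul, abs_mul]
                        apply add_le_add
                        · exact mul_le_mul (hhL j a c) (hGinc a c) (abs_nonneg _) (by positivity)
                        · exact mul_le_mul (hhM j a c) (hgdiff a c) (abs_nonneg _) (by positivity)
                    _ = L * η * Bg + (Ch + L * M) * (2 * δ) := by ring
              _ = (d:ℝ) * (L * η * Bg + (Ch + L * M) * (2 * δ)) := by
                  rw [Finset.sum_const, Finset.card_univ, Fintype.card_fin, nsmul_eq_mul]
        _ = (d:ℝ) * (d:ℝ) * (L * η * Bg + (Ch + L * M) * (2 * δ)) := by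
            rw [Finset.sum_const, Finset.card_univ, Fintype.card_fin, nsmul_eq_mul]; ring
    have h1 : |(s - u) * (b zn j - b z j)| ≤ T * (L * η) := by
      rw [abs_mul]
      exact mul_le_mul hsum (hbL j) (abs_nonneg _) hT0
    calc |(s - u) * b zn j + (∑ i, σ zn j i * (fn n s i - fn n u i))
          + (∑ a, ∑ c, h zn j a c * (gn n s a c - gn n u a c))
          - ((s - u) * b z j + (∑ i, σ z j i * (f s i - f u i))
          + ∑ a, ∑ c, h z j a c * (g s a c - g u a c))|
        = |(s - u) * (b zn j - b z j)
          + (∑ i, (σ zn j i * (fn n s i - fn n u i) - σ z j i * (f s i - f u i)))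
          + (∑ a, ∑ c, (h zn j a c * (gn n s a c - gn n u a c) - h z j a c * (g s a c - g u a c)))| := by
          congr 1
          simp only [Finset.sum_sub_distrib]
          ring
      _ ≤ |(s - u) * (b zn j - b z j)|
          + |∑ i, (σ zn j i * (fn n s i - fn n u i) - σ z j i * (f s i - f u i))|
          + |∑ a, ∑ c, (h zn j a c * (gn n s a c - gn n u a c) - h z j a c * (g s a c - g u a c))| :=
          abs_add_three _ _ _
      _ ≤ T * (L * η) + (d:ℝ) * (L * η * Bf + (Cσ + L * M) * (2 * δ))
          + (d:ℝ) * (d:ℝ) * (L * η * Bg + (Ch + L * M) * (2 * δ)) := by linarith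
      _ = Cη * η + Cδ * δ := by rw [hCηdef, hCδdef]; ring
  -- the global estimate
  have key : ∀ (η δ : ℝ), 0 ≤ η → 0 ≤ δ → ∀ n : ℕ,
      (∀ r ∈ Set.Icc (0:ℝ) T, ∀ i, |fn n r i - f r i| ≤ δ) →
      (∀ r ∈ Set.Icc (0:ℝ) T, ∀ a c, |gn n r a c - g r a c| ≤ δ) →
      ∀ x : Fin p → ℝ, ‖x‖ ≤ m' → ∀ K : ℕ, K ≤ N →
      (∀ j : ℕ, j < K → ‖Xn n x ((j:ℝ) * T / N) - X x ((j:ℝ) * T / N)‖ ≤ η) →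
      ∀ t, 0 ≤ t → t ≤ (K:ℝ) * T / N → t ≤ T →
      ‖Xn n x t - X x t‖ ≤ (N:ℝ) * (Cη * η + Cδ * δ) := by
    intro η δ hη hδ n hfδ hgδ x hx K hKN herr t ht htK htT
    rw [hXn n x t, hX x t, add_sub_add_left_eq_sub, ← Finset.sum_sub_distrib]
    refine le_trans (norm_sum_le _ _) ?_
    refine le_trans (Finset.sum_le_card_nsmul _ _ (Cη * η + Cδ * δ) ?_) ?_
    · intro k _
      by_cases hk : k < K
      · have hu0 : 0 ≤ min ((k:ℝ) * T / N) t := le_min (grid_nonneg k) ht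
        have hus : min ((k:ℝ) * T / N) t ≤ min (((k:ℝ)+1) * T / N) t :=
          min_le_min (grid_succ k) le_rfl
        have hsT : min (((k:ℝ)+1) * T / N) t ≤ T := (min_le_right _ _).trans htT
        exact termdiff η δ hη hδ n _ _ _ _ hu0 hus hsT (herr k hk)
          (hMX x hx k (le_of_lt (lt_of_lt_of_le hk hKN))) hfδ hgδ
      · push_neg at hk
        have hle : t ≤ (k:ℝ) * T / N := htK.trans (grid_mono hk)
        rw [vanish (fn n) (gn n) _ k t hle, vanish f g _ k t hle, sub_zero, norm_zero]
        exact add_nonneg (mul_nonneg hCη0 hη) (mul_nonneg hCδ0 hδ)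
    · rw [Finset.card_range, nsmul_eq_mul]
  -- the inductive convergence statement
  have main : ∀ K : ℕ, K ≤ N → ∀ ε' : ℝ, 0 < ε' → ∃ n₀ : ℕ, ∀ n ≥ n₀, ∀ x : Fin p → ℝ,
      ‖x‖ ≤ m' → ∀ t : ℝ, 0 ≤ t → t ≤ (K:ℝ) * T / N → t ≤ T → ‖Xn n x t - X x t‖ ≤ ε' := by
    intro K
    induction K with
    | zero =>
      intro _ ε' hε'
      refine ⟨0, fun n _ x _ t ht htK _ => ?_⟩
      have ht0 : t = 0 := le_antisymm (by simpa using htK) ht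
      subst ht0
      rw [hzero (fn n) (gn n) (Xn n) (hXn n) x, hzero f g X hX x, sub_self, norm_zero]
      exact hε'.le
    | succ K ih =>
      intro hK1 ε' hε'
      have hKN : K ≤ N := Nat.le_of_succ_le hK1
      obtain ⟨η, hηdef⟩ : ∃ η : ℝ, η = ε' / (2 * ((N:ℝ) * Cη + 1)) := ⟨_, rfl⟩
      obtain ⟨δ, hδdef⟩ : ∃ δ : ℝ, δ = ε' / (2 * ((N:ℝ) * Cδ + 1)) := ⟨_, rfl⟩
      have hNCη : 0 ≤ (N:ℝ) * Cη := mul_nonneg (Nat.cast_nonneg N) hCη0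
      have hNCδ : 0 ≤ (N:ℝ) * Cδ := mul_nonneg (Nat.cast_nonneg N) hCδ0
      have hdη : (0:ℝ) < 2 * ((N:ℝ) * Cη + 1) := by nlinarith
      have hdδ : (0:ℝ) < 2 * ((N:ℝ) * Cδ + 1) := by nlinarith
      have hη0 : 0 < η := hηdef ▸ div_pos hε' hdη
      have hδ0 : 0 < δ := hδdef ▸ div_pos hε' hdδ
      obtain ⟨n₁, hn₁⟩ := ih hKN η hη0
      obtain ⟨n₂, hn₂⟩ := hfconv δ hδ0
      obtain ⟨n₃, hn₃⟩ := hgconv δ hδ0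
      refine ⟨max n₁ (max n₂ n₃), fun n hn x hx t ht htK htT => ?_⟩
      have hn1 : n ≥ n₁ := le_trans (le_max_left _ _) hn
      have hn2 : n ≥ n₂ := le_trans (le_trans (le_max_left _ _) (le_max_right n₁ _)) hn
      have hn3 : n ≥ n₃ := le_trans (le_trans (le_max_right n₂ _) (le_max_right n₁ _)) hn
      have hfδ : ∀ r ∈ Set.Icc (0:ℝ) T, ∀ i, |fn n r i - f r i| ≤ δ := by
        intro r hr i
        calc |fn n r i - f r i| ≤ ‖fn n r - f r‖ := by
              simpa [Real.norm_eq_abs] using norm_le_pi_norm (fn n r - f r) i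
          _ ≤ δ := hn₂ n hn2 r hr
      have hgδ : ∀ r ∈ Set.Icc (0:ℝ) T, ∀ a c, |gn n r a c - g r a c| ≤ δ :=
        fun r hr => hn₃ n hn3 r hr
      have herr : ∀ j : ℕ, j < K + 1 → ‖Xn n x ((j:ℝ) * T / N) - X x ((j:ℝ) * T / N)‖ ≤ η := by
        intro j hj
        have hjK : j ≤ K := Nat.lt_succ_iff.mp hj
        exact hn₁ n hn1 x hx _ (grid_nonneg j) (grid_mono hjK) (gridT j (hjK.trans hKN))
      have hkey := key η δ hη0.le hδ0.le n hfδ hgδ x hx (K+1) hK1 herr t ht htK htT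
      have hA : ((N:ℝ) * Cη + 1) ≠ 0 := by positivity
      have hB : ((N:ℝ) * Cδ + 1) ≠ 0 := by positivity
      calc ‖Xn n x t - X x t‖ ≤ (N:ℝ) * (Cη * η + Cδ * δ) := hkey
        _ = ((N:ℝ) * Cη) * η + ((N:ℝ) * Cδ) * δ := by ring
        _ ≤ ((N:ℝ) * Cη + 1) * η + ((N:ℝ) * Cδ + 1) * δ := by nlinarith
        _ = ε' / 2 + ε' / 2 := by
            rw [hηdef, hδdef]
            field_simp
        _ = ε' := by ring
  obtain ⟨n₀, hn₀⟩ := main N le_rfl ε hε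
  refine ⟨n₀, fun n hn x hx t ht => ?_⟩
  exact hn₀ n hn x (le_trans hx (le_max_left _ _)) t ht.1 (by rw [hNT]; exact ht.2) ht.2
end
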